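/- arXiv:1911.10590 — 7 statements merged into one kernel-verified Lean document; each statement's English description precedes it below -/
import Mathlib

section
/- For every integer n ≥ 2, the dynamical degree of the Perron number θ_n^{-1} equals n, i.e. dyg(θ_n^{-1}) = n; moreover, the degree of θ_n^{-1} over ℚ equals n when n ≢ 5 (mod 6), and equals n − 2 when n ≡ 5 (mod 6). -/
open Polynomial

namespace SelmerAux

/-- If `p` is a unit trinomial and `q * q.mirror = p * p.mirror`, then
`q ∈ {p, -p, p.mirror, -p.mirror}`.  Adapted from the proof of
`Polynomial.IsUnitTrinomial.irreducible_of_coprime`. -/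
theorem trinomial_factor_classification {p q : ℤ[X]} (hp : p.IsUnitTrinomial)
    (hpq : p * p.mirror = q * q.mirror) :
    q = p ∨ q = -p ∨ q = p.mirror ∨ q = -p.mirror := by
  have hq : IsUnitTrinomial q := (isUnitTrinomial_iff'' hpq).mp hp
  obtain ⟨k, m, n, hkm, hmn, u, v, w, hp'⟩ := hp
  obtain ⟨k', m', n', hkm', hmn', x, y, z, hq'⟩ := hq
  have hk : k = k' := by
    rw [← mul_right_inj' (show 2 ≠ 0 from two_ne_zero), ←
      trinomial_natTrailingDegree hkm hmn u.ne_zero, ← hp', ← natTrailingDegree_mul_mirror, hpq,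
      natTrailingDegree_mul_mirror, hq', trinomial_natTrailingDegree hkm' hmn' x.ne_zero]
  have hn : n = n' := by
    rw [← mul_right_inj' (show 2 ≠ 0 from two_ne_zero), ← trinomial_natDegree hkm hmn w.ne_zero, ←
      hp', ← natDegree_mul_mirror, hpq, natDegree_mul_mirror, hq',
      trinomial_natDegree hkm' hmn' z.ne_zero]
  subst hk
  subst hn
  rcases eq_or_eq_neg_of_sq_eq_sq (y : ℤ) (v : ℤ)
      ((Int.isUnit_sq y.isUnit).trans (Int.isUnit_sq v.isUnit).symm) with
    (h1 | h1)
  · rw [h1] at hq'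
    rcases Polynomial.IsUnitTrinomial.irreducible_aux3 hkm hmn hkm' hmn' u v w x z hp' hq' hpq with
      (h2 | h2)
    · exact Or.inl h2
    · exact Or.inr (Or.inr (Or.inl h2))
  · rw [h1] at hq'
    rw [trinomial_def] at hp'
    rw [← neg_inj, neg_add, neg_add, ← neg_mul, ← neg_mul, ← neg_mul, ← C_neg, ← C_neg, ← C_neg]
      at hp'
    rw [← neg_mul_neg, ← mirror_neg] at hpq
    rcases Polynomial.IsUnitTrinomial.irreducible_aux3 hkm hmn hkm' hmn' (-u) (-v) (-w) x z hp' hq'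
      hpq with (rfl | rfl)
    · exact Or.inr (Or.inl rfl)
    · exact Or.inr (Or.inr (Or.inr p.mirror_neg))

variable {n : ℕ}

/-- No complex number is a common root of `X^n - X^(n-1) - 1` and its mirror
`1 - X - X^n`, unless `n % 6 = 5`. -/
theorem no_common_root (hn : 2 ≤ n) (hmod : n % 6 ≠ 5) (z : ℂ)
    (h1 : z ^ n - z ^ (n - 1) - 1 = 0) (h2 : 1 - z - z ^ n = 0) : False := by
  have hz0 : z ≠ 0 := by
    rintro rfl
    rw [zero_pow (by omega : n ≠ 0)] at h2
    norm_num at h2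
  have e1 : z ^ (n - 1) * z = z ^ n := by
    rw [← pow_succ]; congr 1; omega
  have e2 : z ^ (n - 2) * z = z ^ (n - 1) := by
    rw [← pow_succ]; congr 1; omega
  -- z ^ (n-1) = -z
  have h3 : z ^ (n - 1) = -z := by linear_combination -h1 - h2
  have h4 : z ^ (n - 2) = -1 := by
    have : z ^ (n - 2) * z = (-1) * z := by rw [e2, h3]; ring
    exact mul_right_cancel₀ hz0 this
  -- z ^ 2 = z - 1
  have h5 : z ^ 2 = z - 1 := by
    have hzn : z ^ n = z ^ (n - 2) * z * z := by
      rw [e2, e1]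
    rw [h4] at hzn
    linear_combination h2 + hzn
  have h6 : z ^ 6 = 1 := by
    have h33 : z ^ 3 = -1 := by linear_combination (z + 1) * h5
    calc z ^ 6 = (z ^ 3) ^ 2 := by ring
    _ = 1 := by rw [h33]; ring
  -- reduce exponent n - 2 mod 6
  have key : z ^ ((n - 2) % 6) = -1 := by
    conv_lhs at h4 => rw [← Nat.mod_add_div (n - 2) 6, pow_add, pow_mul, h6, one_pow, mul_one]
    exact h4
  have hr : (n - 2) % 6 ≠ 3 := by omega
  have hrlt : (n - 2) % 6 < 6 := Nat.mod_lt _ (by norm_num)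
  interval_cases h : (n - 2) % 6
  · norm_num at key
  · rw [pow_one] at key
    rw [key] at h5
    norm_num at h5
  · rw [h5] at key
    have : z = 0 := by linear_combination key
    exact hz0 this
  · exact hr rfl
  · have : z ^ 4 = -z := by
      calc z ^ 4 = (z ^ 2) ^ 2 := by ring
      _ = -z := by rw [h5]; linear_combination h5
    rw [this] at key
    have hz1 : z = 1 := by linear_combination -key
    rw [hz1] at h5
    norm_num at h5
  · have : z ^ 5 = 1 - z := by
      calc z ^ 5 = (z ^ 2) ^ 2 * z := by ring
      _ = 1 - z := by rw [h5]; linear_combination (z - 1) * h5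
    rw [this] at key
    have hz2 : z = 2 := by linear_combination -key
    rw [hz2] at h5
    norm_num at h5


theorem f_eq_trinomial (hn : 2 ≤ n) :
    (X ^ n - X ^ (n - 1) - 1 : ℤ[X]) = trinomial 0 (n - 1) n (-1 : ℤ) (-1) 1 := by
  simp only [trinomial, C_neg, C_1]
  ring

theorem f_monic (hn : 2 ≤ n) : (X ^ n - X ^ (n - 1) - 1 : ℤ[X]).Monic := by
  rw [f_eq_trinomial hn]
  exact trinomial_monic (by omega) (by omega)

theorem f_natDegree (hn : 2 ≤ n) : (X ^ n - X ^ (n - 1) - 1 : ℤ[X]).natDegree = n := by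
  rw [f_eq_trinomial hn]
  exact trinomial_natDegree (by omega) (by omega) one_ne_zero

theorem f_isUnitTrinomial (hn : 2 ≤ n) : (X ^ n - X ^ (n - 1) - 1 : ℤ[X]).IsUnitTrinomial :=
  ⟨0, n - 1, n, by omega, by omega, -1, -1, 1, by
    rw [f_eq_trinomial hn]; norm_num⟩

theorem f_mirror (hn : 2 ≤ n) :
    (X ^ n - X ^ (n - 1) - 1 : ℤ[X]).mirror = 1 - X - X ^ n := by
  rw [f_eq_trinomial hn, trinomial_mirror (by omega) (by omega) (by norm_num) one_ne_zero]
  have : n - (n - 1) + 0 = 1 := by omega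
  rw [this]
  simp only [trinomial, C_neg, C_1]
  ring

/-- `X^2 - X + 1` divides `X^n - X^(n-1) - 1` when `n % 6 = 5`. -/
theorem p_dvd_f (hmod : n % 6 = 5) :
    (X ^ 2 - X + 1 : ℤ[X]) ∣ X ^ n - X ^ (n - 1) - 1 := by
  have hn5 : 5 ≤ n := by omega
  obtain ⟨m, hm⟩ : ∃ m, n - 5 = 6 * m := ⟨(n - 5) / 6, by omega⟩
  have key : (X ^ n - X ^ (n - 1) - 1 : ℤ[X])
      = X ^ (n - 5) * (X ^ 5 - X ^ 4 - 1) + ((X ^ 6) ^ m - 1 ^ m) := by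
    have e1 : (X : ℤ[X]) ^ (n - 5) * X ^ 5 = X ^ n := by
      rw [← pow_add]; congr 1; omega
    have e2 : (X : ℤ[X]) ^ (n - 5) * X ^ 4 = X ^ (n - 1) := by
      rw [← pow_add]; congr 1; omega
    have e3 : ((X : ℤ[X]) ^ 6) ^ m = X ^ (n - 5) := by
      rw [← pow_mul, ← hm]
    rw [e3]
    ring_nf
    rw [mul_comm ((X:ℤ[X]) ^ (n-5))] at e1 e2
    rw [e1, e2]
    ring
  rw [key]
  apply dvd_add
  · exact Dvd.dvd.mul_left ⟨X ^ 3 - X - 1, by ring⟩ _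
  · exact dvd_trans ⟨X ^ 4 + X ^ 3 - X - 1, by ring⟩ (sub_dvd_pow_sub_pow _ _ m)

/-- `(X^2 - X + 1)^2` does not divide `X^n - X^(n-1) - 1`. -/
theorem p_sq_not_dvd_f (hn : 2 ≤ n) :
    ¬ ((X ^ 2 - X + 1 : ℤ[X]) * (X ^ 2 - X + 1)) ∣ (X ^ n - X ^ (n - 1) - 1) := by
  rintro ⟨q, hq⟩
  -- pass to ℂ and use the root ζ = (1 + i√3)/2
  set ζ : ℂ := (1 + Complex.I * Real.sqrt 3) / 2 with hζdef
  have hI : (Complex.I : ℂ) ^ 2 = -1 := Complex.I_sq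
  have hs3 : (Real.sqrt 3 : ℂ) ^ 2 = 3 := by
    rw [← Complex.ofReal_pow, Real.sq_sqrt (by norm_num : (3:ℝ) ≥ 0)]
    norm_num
  have hζ : ζ ^ 2 - ζ + 1 = 0 := by
    rw [hζdef]
    field_simp
    ring_nf
    rw [hI, hs3]
    ring
  have h0 : (Polynomial.aeval ζ) (X ^ 2 - X + 1 : ℤ[X]) = 0 := by
    simp only [map_add, map_sub, map_pow, map_one, aeval_X]
    exact hζ
  have hζ0 : ζ ≠ 0 := by
    intro h
    rw [h] at hζ
    norm_num at hζ
  -- evaluate the derivative at ζ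
  have hder := congrArg (fun P : ℤ[X] => Polynomial.aeval ζ (derivative P)) hq
  have hR : (Polynomial.aeval ζ) (derivative ((X ^ 2 - X + 1 : ℤ[X]) * (X ^ 2 - X + 1) * q))
      = 0 := by
    simp only [derivative_mul, map_add, map_mul, h0]
    ring
  rw [hR] at hder
  have hL : derivative (X ^ n - X ^ (n - 1) - 1 : ℤ[X])
      = C ((n : ℤ)) * X ^ (n - 1) - C (((n - 1 : ℕ) : ℤ)) * X ^ (n - 2) := by
    have : n - 1 - 1 = n - 2 := by omega
    rw [derivative_sub, derivative_sub, derivative_one, derivative_X_pow, derivative_X_pow, this,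
      sub_zero]
  rw [hL] at hder
  simp only [map_sub, map_mul, map_pow, aeval_X, aeval_C] at hder
  push_cast at hder
  -- hder : n * ζ^(n-1) - (n-1) * ζ^(n-2) = 0  (with ℕ-sub cast)
  have e2 : ζ ^ (n - 2) * ζ = ζ ^ (n - 1) := by
    rw [← pow_succ]; congr 1; omega
  have hfac : ζ ^ (n - 2) * ((n : ℂ) * ζ - ((n : ℂ) - 1)) = 0 := by
    have hcast : (((n - 1 : ℕ)) : ℂ) = (n : ℂ) - 1 := by
      push_cast [Nat.cast_sub (by omega : 1 ≤ n)]
      ring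
    rw [hcast] at hder
    rw [mul_sub, mul_comm (ζ ^ (n - 2)) ((n : ℂ) * ζ), mul_assoc, mul_comm ζ, e2]
    linear_combination hder
  have hd : (n : ℂ) * ζ - ((n : ℂ) - 1) = 0 :=
    (mul_eq_zero.mp hfac).resolve_left (pow_ne_zero _ hζ0)
  have key : (n : ℂ) ^ 2 - n + 1 = 0 := by
    linear_combination (n : ℂ) ^ 2 * hζ + (1 - (n : ℂ) * ζ) * hd
  have key2 : ((n ^ 2 - n + 1 : ℤ) : ℂ) = 0 := by
    push_cast
    linear_combination key
  have key3 : (n : ℤ) ^ 2 - n + 1 = 0 := by exact_mod_cast key2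
  nlinarith [sq_nonneg ((n : ℤ) - 1), sq_nonneg (n : ℤ)]


theorem f_coeff_zero (hn : 2 ≤ n) : (X ^ n - X ^ (n - 1) - 1 : ℤ[X]).coeff 0 = -1 := by
  rw [coeff_sub, coeff_sub, coeff_X_pow, coeff_X_pow, coeff_one,
    if_neg (by omega : ¬ (0 = n)), if_neg (by omega : ¬ (0 = n - 1)), if_pos rfl]
  norm_num

/-- If `w` is a monic factor of `f = X^n - X^(n-1) - 1` (for `2 ≤ n`) with
`w.mirror = w` or `w.mirror = -w`, then `w` divides `X^2 - X + 1`. -/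
theorem selfmirror_factor_dvd (hn : 2 ≤ n) {w : ℤ[X]}
    (hwf : w ∣ (X ^ n - X ^ (n - 1) - 1 : ℤ[X]))
    (hmw : w.mirror = w ∨ w.mirror = -w) :
    w ∣ (X ^ 2 - X + 1 : ℤ[X]) := by
  have hwm : w ∣ (X ^ n - X ^ (n - 1) - 1 : ℤ[X]).mirror := by
    obtain ⟨v, hv⟩ := hwf
    refine dvd_trans ?_ ⟨v.mirror, by rw [hv, mirror_mul_of_domain]⟩
    rcases hmw with h | h
    · rw [h]
    · rw [h]; exact dvd_neg.mpr dvd_rfl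
  rw [f_mirror hn] at hwm
  have hsum : w ∣ (X : ℤ[X]) * (X ^ (n - 2) + 1) := by
    have hiden : (X : ℤ[X]) * (X ^ (n - 2) + 1)
        = -((X ^ n - X ^ (n - 1) - 1) + (1 - X - X ^ n)) := by
      have e : (X : ℤ[X]) * X ^ (n - 2) = X ^ (n - 1) := by
        rw [← pow_succ']; congr 1; omega
      rw [mul_add, e]; ring
    rw [hiden]
    exact dvd_neg.mpr (dvd_add hwf hwm)
  -- coefficient 0 of w is a unit
  have hw0 : IsUnit (w.coeff 0) := by
    obtain ⟨v, hv⟩ := hwf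
    have h0 : w.coeff 0 * v.coeff 0 = -1 := by
      rw [← mul_coeff_zero, ← hv, f_coeff_zero hn]
    exact isUnit_of_dvd_unit ⟨v.coeff 0, h0.symm ▸ rfl⟩ isUnit_one.neg
  have hcop : IsCoprime (X : ℤ[X]) w := by
    obtain ⟨u0, hu0⟩ := hw0
    refine ⟨-(C ((u0⁻¹ : ℤˣ) : ℤ)) * w.divX, C ((u0⁻¹ : ℤˣ) : ℤ), ?_⟩
    have := w.divX_mul_X_add
    calc -(C ((u0⁻¹ : ℤˣ) : ℤ)) * w.divX * X + C ((u0⁻¹ : ℤˣ) : ℤ) * w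
        = C ((u0⁻¹ : ℤˣ) : ℤ) * (w - w.divX * X) := by ring
      _ = C ((u0⁻¹ : ℤˣ) : ℤ) * C (w.coeff 0) := by
          have h' : w - w.divX * X = C (w.coeff 0) := by linear_combination -this
          rw [h']
      _ = 1 := by rw [← hu0, ← C_mul, Units.inv_mul, C_1]
  have h2 : w ∣ (X ^ (n - 2) + 1 : ℤ[X]) := (hcop.symm.dvd_of_dvd_mul_left hsum)
  have hiden2 : (X ^ 2 - X + 1 : ℤ[X])
      = (X ^ 2 - X) * (X ^ (n - 2) + 1) - (X ^ n - X ^ (n - 1) - 1) := by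
    have e1 : (X : ℤ[X]) ^ 2 * X ^ (n - 2) = X ^ n := by
      rw [← pow_add]; congr 1; omega
    have e2 : (X : ℤ[X]) * X ^ (n - 2) = X ^ (n - 1) := by
      rw [← pow_succ']; congr 1; omega
    calc (X ^ 2 - X + 1 : ℤ[X])
        = X ^ 2 * X ^ (n - 2) + X ^ 2 - (X * X ^ (n - 2) + X) - (X ^ 2 * X ^ (n - 2)
            - X * X ^ (n - 2) - 1) := by ring
      _ = _ := by linear_combination e2 - e1
  rw [hiden2]
  exact dvd_sub (Dvd.dvd.mul_left h2 _) hwf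


theorem p_eq_trinomial : (X ^ 2 - X + 1 : ℤ[X]) = trinomial 0 1 2 (1 : ℤ) (-1) 1 := by
  simp only [trinomial, C_neg, C_1]
  ring

theorem p_monic : (X ^ 2 - X + 1 : ℤ[X]).Monic := by
  rw [p_eq_trinomial]; exact trinomial_monic (by omega) (by omega)

theorem p_natDegree : (X ^ 2 - X + 1 : ℤ[X]).natDegree = 2 := by
  rw [p_eq_trinomial]; exact trinomial_natDegree (by omega) (by omega) one_ne_zero

theorem p_ne_zero : (X ^ 2 - X + 1 : ℤ[X]) ≠ 0 := p_monic.ne_zero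

/-- Core lemma: `X^n - X^(n-1) - 1` admits no factorization `(X^2-X+1) * A * B`
with `A`, `B` monic of positive degree. -/
theorem core (hn : 2 ≤ n) {A B : ℤ[X]} (hA : A.Monic) (hB : B.Monic)
    (hdA : 1 ≤ A.natDegree) (hdB : 1 ≤ B.natDegree)
    (hfab : (X ^ n - X ^ (n - 1) - 1 : ℤ[X]) = (X ^ 2 - X + 1) * A * B) : False := by
  have hAne : A ≠ 0 := hA.ne_zero
  have hBne : B ≠ 0 := hB.ne_zero
  have hpAne : (X ^ 2 - X + 1 : ℤ[X]) * A ≠ 0 := mul_ne_zero p_ne_zero hAne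
  have hBmne : B.mirror ≠ 0 := fun hh => hBne (by rwa [mirror_eq_zero] at hh)
  -- the auxiliary polynomial u
  have humirror : ((X ^ 2 - X + 1 : ℤ[X]) * A * B.mirror).mirror
      = (X ^ 2 - X + 1 : ℤ[X]).mirror * A.mirror * B := by
    rw [mirror_mul_of_domain, mirror_mul_of_domain, mirror_mirror]
  have hfm : (X ^ n - X ^ (n - 1) - 1 : ℤ[X]).mirror
      = (X ^ 2 - X + 1 : ℤ[X]).mirror * A.mirror * B.mirror := by
    rw [hfab, mirror_mul_of_domain, mirror_mul_of_domain]
  have hmm : (X ^ n - X ^ (n - 1) - 1 : ℤ[X]) * (X ^ n - X ^ (n - 1) - 1 : ℤ[X]).mirror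
      = ((X ^ 2 - X + 1 : ℤ[X]) * A * B.mirror)
        * ((X ^ 2 - X + 1 : ℤ[X]) * A * B.mirror).mirror := by
    rw [humirror, hfm, hfab]
    ring
  have hBdvdf : B ∣ (X ^ n - X ^ (n - 1) - 1 : ℤ[X]) :=
    ⟨(X ^ 2 - X + 1) * A, by rw [hfab]; ring⟩
  have hpAdvdf : (X ^ 2 - X + 1 : ℤ[X]) * A ∣ (X ^ n - X ^ (n - 1) - 1 : ℤ[X]) :=
    ⟨B, hfab⟩
  -- classify u
  have hclass := trinomial_factor_classification (f_isUnitTrinomial hn) hmm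
  -- in every case, some monic factor w of f satisfies mirror w = ± w and so divides X²-X+1
  have hwcase : B ∣ (X ^ 2 - X + 1 : ℤ[X]) ∨
      (X ^ 2 - X + 1 : ℤ[X]) * A ∣ (X ^ 2 - X + 1 : ℤ[X]) := by
    rcases hclass with h | h | h | h
    · left
      refine selfmirror_factor_dvd hn hBdvdf (Or.inl ?_)
      rw [hfab] at h
      exact mul_left_cancel₀ hpAne h
    · left
      refine selfmirror_factor_dvd hn hBdvdf (Or.inr ?_)
      rw [hfab] at h
      have h' : (X ^ 2 - X + 1 : ℤ[X]) * A * B.mirror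
          = (X ^ 2 - X + 1 : ℤ[X]) * A * (-B) := by rw [h]; ring
      exact mul_left_cancel₀ hpAne h'
    · right
      refine selfmirror_factor_dvd hn hpAdvdf (Or.inl ?_)
      rw [hfm] at h
      have h' : ((X ^ 2 - X + 1 : ℤ[X]) * A).mirror * B.mirror
          = ((X ^ 2 - X + 1 : ℤ[X]) * A) * B.mirror := by
        rw [mirror_mul_of_domain]
        linear_combination -h
      exact mul_right_cancel₀ hBmne h'
    · right
      refine selfmirror_factor_dvd hn hpAdvdf (Or.inr ?_)
      rw [hfm] at h
      have h' : ((X ^ 2 - X + 1 : ℤ[X]) * A).mirror * B.mirror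
          = (-((X ^ 2 - X + 1 : ℤ[X]) * A)) * B.mirror := by
        rw [mirror_mul_of_domain]
        linear_combination h
      exact mul_right_cancel₀ hBmne h'
  rcases hwcase with hw | hw
  · -- B divides X^2 - X + 1
    have hdeg2 : B.natDegree ≤ 2 := by
      have := natDegree_le_of_dvd hw p_ne_zero
      rwa [p_natDegree] at this
    interval_cases hd : B.natDegree
    · -- degree 1 : integer root of X^2 - X + 1
      obtain ⟨c, hc⟩ := hw
      set b := B.coeff 0 with hb
      have hXC : B = X + C b := hB.eq_X_add_C hd
      have hBeval : B.eval (-b) = 0 := by rw [hXC]; simp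
      have heval := congrArg (Polynomial.eval (-b)) hc
      rw [eval_mul, hBeval, zero_mul] at heval
      simp only [eval_add, eval_sub, eval_pow, eval_X, eval_C, eval_one] at heval
      have : b ^ 2 + b + 1 = 0 := by linear_combination heval
      nlinarith [sq_nonneg b, sq_nonneg (b + 1)]
    · -- degree 2 : B = X^2 - X + 1, giving a square factor
      obtain ⟨c, hc⟩ := hw
      have hcne : c ≠ 0 := by
        rintro rfl
        rw [mul_zero] at hc
        exact p_ne_zero hc
      have hcd : c.natDegree = 0 := by
        have := natDegree_mul hBne hcne
        rw [← hc, p_natDegree, hd] at this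
        omega
      have hclead : c.Monic := by
        have h1 := leadingCoeff_mul B c
        rw [← hc] at h1
        rw [hB.leadingCoeff, one_mul] at h1
        exact (h1.symm.trans p_monic.leadingCoeff : c.leadingCoeff = 1)
      have hc1 : c = 1 := hclead.natDegree_eq_zero.mp hcd
      rw [hc1, mul_one] at hc
      refine p_sq_not_dvd_f hn ⟨A, ?_⟩
      rw [hfab, hc]
      ring
  · -- X^2-X+1 * A divides X^2 - X + 1 : degree contradiction
    have hdeg := natDegree_le_of_dvd hw p_ne_zero
    rw [natDegree_mul p_ne_zero hAne, p_natDegree] at hdeg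
    omega


theorem f_irreducible (hn : 2 ≤ n) (hmod : n % 6 ≠ 5) :
    Irreducible (X ^ n - X ^ (n - 1) - 1 : ℤ[X]) := by
  apply (f_isUnitTrinomial hn).irreducible_of_coprime'
  rintro z ⟨h1, h2⟩
  rw [f_mirror hn] at h2
  simp only [map_sub, map_pow, map_one, aeval_X] at h1 h2
  exact no_common_root hn hmod z h1 h2

theorem G_irreducible (hmod : n % 6 = 5) {G : ℤ[X]}
    (hG : (X ^ n - X ^ (n - 1) - 1 : ℤ[X]) = (X ^ 2 - X + 1) * G) :
    Irreducible G := by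
  have hn : 2 ≤ n := by omega
  have hn5 : 5 ≤ n := by omega
  have hGmonic : G.Monic := by
    have h1 : ((X ^ 2 - X + 1 : ℤ[X]) * G).Monic := hG ▸ f_monic hn
    exact p_monic.of_mul_monic_left h1
  have hGne : G ≠ 0 := hGmonic.ne_zero
  have hGdeg : G.natDegree = n - 2 := by
    have h1 := congrArg natDegree hG
    rw [f_natDegree hn, natDegree_mul p_ne_zero hGne, p_natDegree] at h1
    omega
  constructor
  · intro hu
    have := natDegree_eq_zero_of_isUnit hu
    omega
  · intro A B hAB
    by_contra hc
    push_neg at hc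
    obtain ⟨hA, hB⟩ := hc
    have hlead : A.leadingCoeff * B.leadingCoeff = 1 := by
      rw [← leadingCoeff_mul, ← hAB]
      exact hGmonic.leadingCoeff
    have main : ∀ A' B' : ℤ[X], A'.Monic → B'.Monic → ¬IsUnit A' → ¬IsUnit B' →
        G = A' * B' → False := by
      intro A' B' hA' hB' huA huB hG'
      have hdA : 1 ≤ A'.natDegree := by
        rcases Nat.eq_zero_or_pos A'.natDegree with h | h
        · exact absurd (hA'.natDegree_eq_zero.mp h ▸ isUnit_one) huA
        · exact h
      have hdB : 1 ≤ B'.natDegree := by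
        rcases Nat.eq_zero_or_pos B'.natDegree with h | h
        · exact absurd (hB'.natDegree_eq_zero.mp h ▸ isUnit_one) huB
        · exact h
      exact core hn hA' hB' hdA hdB (by rw [hG, hG']; ring)
    rcases Int.mul_eq_one_iff_eq_one_or_neg_one.mp hlead with ⟨ha, hb⟩ | ⟨ha, hb⟩
    · exact main A B ha hb hA hB hAB
    · refine main (-A) (-B) ?_ ?_ ?_ ?_ (by rw [hAB]; ring)
      · show (-A).leadingCoeff = 1
        rw [leadingCoeff_neg, ha]; norm_num
      · show (-B).leadingCoeff = 1
        rw [leadingCoeff_neg, hb]; norm_num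
      · intro hu
        exact hA (by simpa using hu.neg)
      · intro hu
        exact hB (by simpa using hu.neg)

/-- The rational minimal polynomial degree, non-exceptional case -/
theorem minpoly_deg_eq (hn : 2 ≤ n) (hmod : n % 6 ≠ 5) {β : ℝ}
    (hβ : β ^ n - β ^ (n - 1) - 1 = 0) : (minpoly ℚ β).natDegree = n := by
  have hmap : map (Int.castRingHom ℚ) (X ^ n - X ^ (n - 1) - 1 : ℤ[X])
      = (X ^ n - X ^ (n - 1) - 1 : ℚ[X]) := by
    simp [Polynomial.map_sub, Polynomial.map_pow, Polynomial.map_one, Polynomial.map_X]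
  have hirr : Irreducible (X ^ n - X ^ (n - 1) - 1 : ℚ[X]) := by
    have h := (IsPrimitive.Int.irreducible_iff_irreducible_map_cast
      (f_monic hn).isPrimitive).mp (f_irreducible hn hmod)
    rwa [hmap] at h
  have haev : aeval β (X ^ n - X ^ (n - 1) - 1 : ℚ[X]) = 0 := by
    simp only [map_sub, map_pow, map_one, aeval_X]
    exact hβ
  have hmon : (X ^ n - X ^ (n - 1) - 1 : ℚ[X]).Monic := by
    have := (f_monic hn).map (Int.castRingHom ℚ)
    rwa [hmap] at this
  rw [← minpoly.eq_of_irreducible_of_monic hirr haev hmon]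
  have := congrArg natDegree hmap
  rw [(f_monic hn).natDegree_map, f_natDegree hn] at this
  exact this.symm

/-- The rational minimal polynomial degree, exceptional case -/
theorem minpoly_deg_eq' (hmod : n % 6 = 5) {β : ℝ}
    (hβ : β ^ n - β ^ (n - 1) - 1 = 0) : (minpoly ℚ β).natDegree = n - 2 := by
  have hn : 2 ≤ n := by omega
  obtain ⟨G, hG⟩ := p_dvd_f hmod
  have hGirr : Irreducible G := G_irreducible hmod hG
  have hGmonic : G.Monic := by
    have h1 : ((X ^ 2 - X + 1 : ℤ[X]) * G).Monic := hG ▸ f_monic hn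
    exact p_monic.of_mul_monic_left h1
  have hGirrQ : Irreducible (map (Int.castRingHom ℚ) G) :=
    (IsPrimitive.Int.irreducible_iff_irreducible_map_cast hGmonic.isPrimitive).mp hGirr
  have haevG : aeval β G = 0 := by
    have h1 := congrArg (fun P : ℤ[X] => Polynomial.aeval β P) hG
    simp only [map_sub, map_add, map_mul, map_pow, map_one, aeval_X] at h1
    rw [hβ] at h1
    have hppos : (0 : ℝ) < β ^ 2 - β + 1 := by nlinarith [sq_nonneg (2 * β - 1)]
    rcases mul_eq_zero.mp h1.symm with h | h
    · exact absurd h hppos.ne'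
    · exact h
  have haevQ : aeval β (map (Int.castRingHom ℚ) G) = 0 := by
    rw [show (Int.castRingHom ℚ) = algebraMap ℤ ℚ from rfl, aeval_map_algebraMap]
    exact haevG
  rw [← minpoly.eq_of_irreducible_of_monic hGirrQ haevQ (hGmonic.map _)]
  rw [hGmonic.natDegree_map]
  have h1 := congrArg natDegree hG
  rw [f_natDegree hn, natDegree_mul p_ne_zero hGmonic.ne_zero, p_natDegree] at h1
  omega

end SelmerAux


/-- For every integer `n ≥ 2`, the dynamical degree of the Perron number
`θ_n⁻¹` equals `n`; moreover the degree of `θ_n⁻¹` over `ℚ` equals `n` when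
`n ≢ 5 (mod 6)` and equals `n - 2` when `n ≡ 5 (mod 6)`.
Here `θ n` is the unique root of `-1 + X + X^n` in `(0,1)`, and `dyg` is the dynamical
degree function: `dyg β = n` for the unique `n ≥ 3` with `θ_n⁻¹ ≤ β < θ_{n-1}⁻¹`,
with the convention `dyg ((1+√5)/2) = 2`. -/
theorem dyg_theta_inv_eq_and_degree
    (θ : ℕ → ℝ)
    (hθ : ∀ n : ℕ, 2 ≤ n → θ n ∈ Set.Ioo (0 : ℝ) 1 ∧ -1 + θ n + θ n ^ n = 0)
    (dyg : ℝ → ℕ)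
    (hdyg : ∀ (β : ℝ) (n : ℕ), 3 ≤ n → (θ n)⁻¹ ≤ β → β < (θ (n - 1))⁻¹ → dyg β = n)
    (hdyg2 : dyg ((1 + Real.sqrt 5) / 2) = 2) :
    ∀ n : ℕ, 2 ≤ n →
      dyg ((θ n)⁻¹) = n ∧
      (¬ n % 6 = 5 → (minpoly ℚ ((θ n)⁻¹)).natDegree = n) ∧
      (n % 6 = 5 → (minpoly ℚ ((θ n)⁻¹)).natDegree = n - 2) := by
  intro n hn
  obtain ⟨⟨ht0, ht1⟩, hteq⟩ := hθ n hn
  have htne : θ n ≠ 0 := ne_of_gt ht0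
  -- the root equation for β = (θ n)⁻¹
  have hβ : ((θ n)⁻¹) ^ n - ((θ n)⁻¹) ^ (n - 1) - 1 = 0 := by
    have h1 : θ n ^ n * ((θ n)⁻¹) ^ n = 1 := by
      rw [← mul_pow, mul_inv_cancel₀ htne, one_pow]
    have h2 : θ n ^ n * ((θ n)⁻¹) ^ (n - 1) = θ n := by
      have hsucc : θ n ^ n = θ n * θ n ^ (n - 1) := by
        rw [← pow_succ']
        congr 1
        omega
      rw [hsucc, mul_assoc, ← mul_pow, mul_inv_cancel₀ htne, one_pow, mul_one]
    have h3 : θ n ^ n * (((θ n)⁻¹) ^ n - ((θ n)⁻¹) ^ (n - 1) - 1) = 0 := by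
      rw [mul_sub, mul_sub, h1, h2, mul_one]
      linarith [hteq]
    rcases mul_eq_zero.mp h3 with h | h
    · exact absurd h (pow_ne_zero _ htne)
    · exact h
  refine ⟨?_, fun hmod => SelmerAux.minpoly_deg_eq hn hmod hβ,
    fun hmod => SelmerAux.minpoly_deg_eq' hmod hβ⟩
  -- the dynamical degree
  rcases eq_or_lt_of_le hn with h2 | h3
  · -- n = 2 : θ 2 = (√5 - 1)/2
    have h2' : n = 2 := h2.symm
    subst h2'
    have hteq2 : θ 2 ^ 2 = 1 - θ 2 := by linarith [hteq]
    have hs5 : Real.sqrt 5 ^ 2 = 5 := Real.sq_sqrt (by norm_num)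
    have hs5pos : 2 < Real.sqrt 5 := by
      nlinarith [Real.sqrt_nonneg 5, hs5]
    have hc : ((Real.sqrt 5 - 1) / 2) ^ 2 = 1 - (Real.sqrt 5 - 1) / 2 := by
      nlinarith [hs5]
    have hfactor : (θ 2 - (Real.sqrt 5 - 1) / 2) * (θ 2 + (Real.sqrt 5 - 1) / 2 + 1) = 0 := by
      nlinarith [hteq2, hc]
    have hpos : θ 2 + (Real.sqrt 5 - 1) / 2 + 1 > 0 := by
      nlinarith [ht0, hs5pos]
    have hθ2 : θ 2 = (Real.sqrt 5 - 1) / 2 := by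
      rcases mul_eq_zero.mp hfactor with h | h
      · linarith [h]
      · linarith [h, hpos]
    have hinv : (θ 2)⁻¹ = (1 + Real.sqrt 5) / 2 := by
      apply inv_eq_of_mul_eq_one_right
      rw [hθ2]
      nlinarith [hs5]
    rw [hinv]
    exact hdyg2
  · -- n ≥ 3
    have hn3 : 3 ≤ n := h3
    obtain ⟨⟨hs0, hs1⟩, hseq⟩ := hθ (n - 1) (by omega)
    -- monotonicity : θ (n-1) < θ n
    have hmono : θ (n - 1) < θ n := by
      by_contra hcon
      push_neg at hcon  -- θ n ≤ θ (n - 1)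
      have e1 : θ (n - 1) ^ (n - 1) = 1 - θ (n - 1) := by linarith [hseq]
      have e2 : θ n ^ n = 1 - θ n := by linarith [hteq]
      have k1 : θ n ^ n < θ n ^ (n - 1) :=
        pow_lt_pow_right_of_lt_one₀ ht0 ht1 (by omega)
      have k2 : θ n ^ (n - 1) ≤ θ (n - 1) ^ (n - 1) :=
        pow_le_pow_left₀ (le_of_lt ht0) hcon _
      rw [e1] at k2
      rw [e2] at k1
      linarith [hcon]
    have hβlt : (θ n)⁻¹ < (θ (n - 1))⁻¹ := by
      apply inv_strictAnti₀ hs0 hmono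
    exact hdyg ((θ n)⁻¹) n hn3 le_rfl hβlt
end

section
/- There exists β_0 with 1 < β_0 < θ_6^{-1} such that for every real number β with 1 < β < β_0, the dynamical degree n = dyg(β) satisfies | n·(β − 1)/(−log(β − 1)) − 1 | ≤ ( log(−log(β − 1)) / log(β − 1) )²; in other words, dyg(β) = (−log(β − 1)/(β − 1))·[1 + O(( log(−log(β − 1)) / log(β − 1) )²)] as β → 1⁺, with constant 1 in the Big O. -/
set_option maxHeartbeats 2000000 in
/-- There exists `β₀` with `1 < β₀ < θ_6⁻¹` such that for every real `β`
with `1 < β < β₀`, the dynamical degree `n = dyg β` satisfies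
`| n·(β−1)/(−log(β−1)) − 1 | ≤ ( log(−log(β−1)) / log(β−1) )²`;
i.e. `dyg β = (−log(β−1)/(β−1))·(1 + O((log(−log(β−1))/log(β−1))²))` as `β → 1⁺`,
with constant `1` in the Big O. -/
theorem dyg_asymptotic_expansion
    (θ : ℕ → ℝ)
    (hθ : ∀ n : ℕ, 2 ≤ n → θ n ∈ Set.Ioo (0 : ℝ) 1 ∧ -1 + θ n + θ n ^ n = 0)
    (dyg : ℝ → ℕ)
    (hdyg : ∀ (β : ℝ) (n : ℕ), 3 ≤ n → (θ n)⁻¹ ≤ β → β < (θ (n - 1))⁻¹ → dyg β = n)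
    (hdyg2 : dyg ((1 + Real.sqrt 5) / 2) = 2) :
    ∃ β₀ : ℝ, 1 < β₀ ∧ β₀ < (θ 6)⁻¹ ∧
      ∀ β : ℝ, 1 < β → β < β₀ →
        |(dyg β : ℝ) * (β - 1) / (-Real.log (β - 1)) - 1| ≤
          (Real.log (-Real.log (β - 1)) / Real.log (β - 1)) ^ 2 := by
  classical
  -- exp 7 ≥ 98
  have he1 : (2.7 : ℝ) < Real.exp 1 := by
    have := Real.exp_one_gt_d9; linarith
  have he7 : (98 : ℝ) ≤ Real.exp 7 := by
    have h7 : Real.exp 7 = Real.exp 1 ^ 7 := by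
      rw [← Real.exp_nat_mul]; norm_num
    have hp : (2.7:ℝ) ^ 7 ≤ Real.exp 1 ^ 7 :=
      pow_le_pow_left₀ (by norm_num) he1.le 7
    rw [h7]; nlinarith [hp]
  have hexp7pos : (0:ℝ) < Real.exp 7 := Real.exp_pos 7
  have heps : Real.exp (-7) ≤ 1/98 := by
    rw [Real.exp_neg]
    rw [inv_le_comm₀ hexp7pos (by norm_num)]
    linarith
  refine ⟨1 + Real.exp (-7), by have := Real.exp_pos (-7); linarith, ?_, ?_⟩
  · -- 1 + exp(-7) < (θ 6)⁻¹
    obtain ⟨⟨h0, h1⟩, heq⟩ := hθ 6 (by norm_num)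
    have h9 : θ 6 < 0.9 := by
      by_contra hc
      push_neg at hc
      have : (0.9:ℝ)^6 ≤ θ 6 ^ 6 := pow_le_pow_left₀ (by norm_num) hc 6
      nlinarith
    have : (0.9:ℝ)⁻¹ < (θ 6)⁻¹ := by
      exact inv_strictAnti₀ h0 h9
    have h98 : Real.exp (-7) ≤ 1/98 := heps
    norm_num at this
    linarith
  · intro β hβ1 hβ2
    set ε : ℝ := β - 1 with hεdef
    have hε0 : 0 < ε := by simp [hεdef]; linarith
    have hεs : ε < Real.exp (-7) := by simp [hεdef]; linarith
    have hb0 : (0:ℝ) < β := by linarith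
    have hε98 : ε < 1/98 := lt_of_lt_of_le hεs heps
    have hβ98 : β < 1 + 1/98 := by linarith
    -- minimal m with 1 ≤ ε * β ^ m
    have hex : ∃ m, 1 ≤ ε * β ^ m := by
      obtain ⟨m, hm⟩ := pow_unbounded_of_one_lt (1/ε) hβ1
      exact ⟨m, by rw [div_lt_iff₀ hε0] at hm; nlinarith⟩
    set m := Nat.find hex with hmdef
    have hm : 1 ≤ ε * β ^ m := Nat.find_spec hex
    have hnot : ∀ j < m, ¬ (1 ≤ ε * β ^ j) := fun j hj => Nat.find_min hex hj
    have hm2 : 2 ≤ m := by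
      by_contra hc
      push_neg at hc
      interval_cases m
      · simp at hm; linarith
      · simp at hm; nlinarith
    obtain ⟨k, hk⟩ : ∃ k, m = k + 1 := ⟨m - 1, by omega⟩
    have hmin : ε * β ^ k < 1 := by
      have := hnot k (by omega)
      linarith [not_le.mp this]
    -- θ (m+1) ≥ β⁻¹, i.e. (θ (m+1))⁻¹ ≤ β
    have hbpow : ∀ j : ℕ, (0:ℝ) < β ^ j := fun j => pow_pos hb0 j
    have hA : (θ (m+1))⁻¹ ≤ β := by
      obtain ⟨⟨hp, hl⟩, heq⟩ := hθ (m+1) (by omega)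
      have hx : β⁻¹ ≤ θ (m+1) := by
        by_contra hc
        push_neg at hc
        have hpw : θ (m+1) ^ (m+1) < (β⁻¹) ^ (m+1) :=
          pow_lt_pow_left₀ hc hp.le (by omega)
        have key : (β⁻¹) ^ (m+1) ≤ 1 - β⁻¹ := by
          have h2 : 1 - β⁻¹ - (β⁻¹) ^ (m+1) = (ε * β ^ m - 1) / β ^ (m+1) := by
            rw [hεdef]; simp only [inv_pow]
            field_simp
            ring
          have h3 : (0:ℝ) ≤ (ε * β ^ m - 1) / β ^ (m+1) :=
            div_nonneg (by linarith) (hbpow (m+1)).le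
          linarith
        have hinv : (0:ℝ) < β⁻¹ := inv_pos.mpr hb0
        linarith
      calc (θ (m+1))⁻¹ ≤ (β⁻¹)⁻¹ := inv_anti₀ (inv_pos.mpr hb0) hx
        _ = β := inv_inv β
    have hB : β < (θ m)⁻¹ := by
      obtain ⟨⟨hp, hl⟩, heq⟩ := hθ m (by omega)
      have hx : θ m < β⁻¹ := by
        by_contra hc
        push_neg at hc
        have hpw : (β⁻¹) ^ m ≤ θ m ^ m :=
          pow_le_pow_left₀ (inv_pos.mpr hb0).le hc m
        have key : 1 - β⁻¹ < (β⁻¹) ^ m := by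
          have h2 : (β⁻¹) ^ m - (1 - β⁻¹) = (1 - ε * β ^ k) / β ^ m := by
            rw [hk]
            rw [hεdef]; simp only [inv_pow]
            field_simp
            ring
          have h3 : (0:ℝ) < (1 - ε * β ^ k) / β ^ m :=
            div_pos (by linarith) (hbpow m)
          linarith
        have hinv : β⁻¹ < 1 := by
          rw [inv_lt_one_iff₀]; right; exact hβ1
        nlinarith
      calc β = (β⁻¹)⁻¹ := (inv_inv β).symm
        _ < (θ m)⁻¹ := inv_strictAnti₀ hp hx
    have hd : dyg β = m + 1 := by
      have := hdyg β (m+1) (by omega) hA (by simpa using hB)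
      exact this
    rw [hd]
    -- now the analytic estimate
    set t : ℝ := -Real.log ε with htdef
    have hlogε : Real.log ε < -7 := by
      have := Real.log_lt_log hε0 hεs
      rwa [Real.log_exp] at this
    have ht7 : 7 < t := by simp [htdef]; linarith
    have ht0 : 0 < t := by linarith
    set Lb : ℝ := Real.log β with hLbdef
    have hLb0 : 0 < Lb := Real.log_pos hβ1
    have hLb1 : Lb ≤ ε := by
      have := Real.log_le_sub_one_of_pos hb0
      simpa [hLbdef, hεdef] using this
    have hLb2 : ε ≤ Lb * β := by
      have h1 := Real.log_le_sub_one_of_pos (inv_pos.mpr hb0)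
      rw [Real.log_inv] at h1
      have h2 : 1 - β⁻¹ ≤ Lb := by simp [hLbdef] at h1 ⊢; linarith
      have h3 : (1 - β⁻¹) * β = ε := by field_simp; rw [hεdef]
      nlinarith
    -- m * Lb ≥ t and k * Lb < t
    have hup : (m : ℝ) * Lb ≥ t := by
      have h1 : (0:ℝ) ≤ Real.log (ε * β ^ m) := Real.log_nonneg hm
      rw [Real.log_mul hε0.ne' (hbpow m).ne', Real.log_pow] at h1
      simp only [htdef, hLbdef] at *
      linarith
    have hdown : (k : ℝ) * Lb < t := by
      have h1 : Real.log (ε * β ^ k) < 0 :=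
        Real.log_neg (by positivity) hmin
      rw [Real.log_mul hε0.ne' (hbpow k).ne', Real.log_pow] at h1
      simp only [htdef, hLbdef] at *
      linarith
    have hmk : (m : ℝ) = (k : ℝ) + 1 := by exact_mod_cast congrArg Nat.cast hk
    have hk0 : (0:ℝ) ≤ (k:ℝ) := Nat.cast_nonneg k
    -- lower bound: (m+1)ε - t ≥ ε
    have hlow : ε ≤ ((m:ℝ)+1) * ε - t := by
      have h1 : (m:ℝ) * Lb ≤ (m:ℝ) * ε := by
        apply mul_le_mul_of_nonneg_left hLb1
        rw [hmk]; linarith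
      linarith [h1, hup, hε0]
    -- upper bound: (m+1)ε - t ≤ ε * (t + 2)
    have hhigh : ((m:ℝ)+1) * ε - t ≤ ε * (t + 2) := by
      have h1 : (k:ℝ) * ε ≤ (k:ℝ) * (Lb * β) :=
        mul_le_mul_of_nonneg_left hLb2 hk0
      have h2 : (k:ℝ) * Lb * β ≤ t * β := by
        apply mul_le_mul_of_nonneg_right hdown.le hb0.le
      have h3 : t * β = t + t * ε := by simp [hεdef]; ring
      have h12 : (k:ℝ) * ε ≤ t * β := by
        calc (k:ℝ) * ε ≤ (k:ℝ) * (Lb * β) := h1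
          _ = (k:ℝ) * Lb * β := by ring
          _ ≤ t * β := h2
      rw [hmk]
      linarith [h12, h3]
    -- final assembly
    have habs : |((m:ℝ)+1) * ε / t - 1| = (((m:ℝ)+1) * ε - t) / t := by
      rw [abs_of_pos]
      · field_simp
      · rw [sub_pos, lt_div_iff₀ ht0]; linarith [hlow, hε0]
    have hεt : ε = Real.exp (-t) := by
      rw [htdef, neg_neg, Real.exp_log hε0]
    have hlogt1 : 1 ≤ Real.log t := by
      rw [Real.le_log_iff_exp_le ht0]
      have : Real.exp 1 < 7 := by nlinarith [Real.exp_one_lt_d9]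
      linarith
    have hkey : ε * t * (t + 2) ≤ 1 := by
      have hst : t * (t + 2) ≤ Real.exp t := by
        set s : ℝ := t - 7 with hsdef
        have hs0 : 0 ≤ s := by linarith
        have hes : Real.exp t = Real.exp 7 * Real.exp s := by
          rw [← Real.exp_add]; congr 1; simp [hsdef]
        have h4 : 1 + s/2 ≤ Real.exp (s/2) := by
          have := Real.add_one_le_exp (s/2); linarith
        have h5 : Real.exp (s/2) ^ 2 = Real.exp s := by
          rw [← Real.exp_nat_mul]; congr 1; push_cast; ring
        have h6 : (1 + s/2)^2 ≤ Real.exp s := by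
          rw [← h5]
          apply pow_le_pow_left₀ (by linarith) h4
        have h7 : t * (t + 2) ≤ 98 * (1 + s/2)^2 := by
          have : t = s + 7 := by linarith
          nlinarith
        nlinarith [Real.exp_pos s]
      rw [hεt, Real.exp_neg]
      rw [inv_mul_eq_div, div_mul_eq_mul_div, div_le_one (Real.exp_pos t)]
      linarith
    have hRHS : (Real.log t / Real.log ε) ^ 2 = (Real.log t)^2 / t^2 := by
      have : Real.log ε = -t := by rw [htdef]; ring
      rw [this]; rw [div_pow]; ring_nf
    push_cast
    rw [show Real.log ε = -t by rw [htdef]; ring]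
    have hgoal : (((m:ℝ)+1) * ε - t) / t ≤ (Real.log t)^2 / t^2 := by
      rw [div_le_div_iff₀ ht0 (by positivity)]
      have h8 : (((m:ℝ)+1) * ε - t) * t ^ 2 ≤ ε * (t+2) * t^2 := by
        nlinarith
      have h9 : ε * (t+2) * t^2 ≤ (Real.log t)^2 * t := by
        have ha : ε * t * (t+2) * t ≤ 1 * t := mul_le_mul_of_nonneg_right hkey ht0.le
        have h1sq : 1 ≤ (Real.log t)^2 := by nlinarith [hlogt1]
        have hb : 1 * t ≤ (Real.log t)^2 * t := mul_le_mul_of_nonneg_right h1sq ht0.le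
        nlinarith [ha, hb]
      linarith
    calc |((m:ℝ)+1) * ε / t - 1| = (((m:ℝ)+1) * ε - t) / t := habs
      _ ≤ (Real.log t)^2 / t^2 := hgoal
      _ = (Real.log t / (-t))^2 := by rw [div_pow]; ring_nf
end

section
/- Let n ≥ 2 and let β be a real number with 1 < β ≤ (1+√5)/2, with digits (t_i)_{i≥1} of the Rényi β-expansion of 1. Then θ_{n+1}^{-1} ≤ β < θ_n^{-1} if and only if: t_1 = 1; t_i = 0 for 2 ≤ i ≤ n; t_{n+1} = 1; t_i ∈ {0,1} for every i; and whenever i < j are indices with n + 1 ≤ i, t_i = t_j = 1 and t_k = 0 for all i < k < j, one has j − i ≥ n. -/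
/-- The β-transformation `T_β : [0,1] → [0,1]`, `T_β(x) = βx − ⌊βx⌋`. -/
noncomputable def betaT (β : ℝ) (x : ℝ) : ℝ := Int.fract (β * x)

/-- The digits of the Rényi β-expansion of `1`: for `i ≥ 1`,
`t_i = ⌊β·T_β^{i−1}(1)⌋` (so `t_1 = ⌊β⌋`). -/
noncomputable def renyiDigit (β : ℝ) (i : ℕ) : ℤ := ⌊β * (betaT β)^[i - 1] 1⌋

namespace RenyiAux

lemma orbit_nonneg (β : ℝ) : ∀ i : ℕ, 0 ≤ (betaT β)^[i] 1
  | 0 => by norm_num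
  | (k+1) => by
      rw [Function.iterate_succ_apply']
      exact Int.fract_nonneg _

lemma orbit_lt_one (β : ℝ) (i : ℕ) (hi : 1 ≤ i) : (betaT β)^[i] 1 < 1 := by
  obtain ⟨k, rfl⟩ : ∃ k, i = k + 1 := ⟨i - 1, by omega⟩
  rw [Function.iterate_succ_apply']
  exact Int.fract_lt_one _

lemma orbit_le_one (β : ℝ) (i : ℕ) : (betaT β)^[i] 1 ≤ 1 := by
  cases i with
  | zero => norm_num
  | succ k => exact (orbit_lt_one β (k+1) (by omega)).le

lemma digit_succ (β : ℝ) (k : ℕ) : renyiDigit β (k+1) = ⌊β * (betaT β)^[k] 1⌋ := by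
  simp [renyiDigit]

lemma orbit_rec (β : ℝ) (k : ℕ) :
    (betaT β)^[k+1] 1 = β * (betaT β)^[k] 1 - renyiDigit β (k+1) := by
  rw [Function.iterate_succ_apply', digit_succ]
  simp only [betaT, Int.fract]

lemma zeros (β : ℝ) (hβ : 0 < β) (i k : ℕ)
    (hlt : ∀ j : ℕ, j ≤ k → β ^ j * (betaT β)^[i] 1 < 1) :
    ((betaT β)^[i+k] 1 = β ^ k * (betaT β)^[i] 1) ∧
    (∀ j : ℕ, 1 ≤ j → j ≤ k → renyiDigit β (i+j) = 0) := by
  induction k with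
  | zero =>
      constructor
      · simp
      · intro j hj1 hj2; omega
  | succ k ih =>
      obtain ⟨hx, hd⟩ := ih (fun j hj => hlt j (le_trans hj (Nat.le_succ k)))
      have hpow : β * (β ^ k * (betaT β)^[i] 1) = β ^ (k+1) * (betaT β)^[i] 1 := by
        rw [pow_succ]; ring
      have hnn : 0 ≤ β ^ (k+1) * (betaT β)^[i] 1 :=
        mul_nonneg (pow_nonneg hβ.le _) (orbit_nonneg β i)
      have hdig : renyiDigit β (i + k + 1) = 0 := by
        rw [digit_succ, hx, hpow]
        exact Int.floor_eq_zero_iff.mpr ⟨hnn, hlt (k+1) le_rfl⟩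
      have hx' : (betaT β)^[i+(k+1)] 1 = β ^ (k+1) * (betaT β)^[i] 1 := by
        have h := orbit_rec β (i+k)
        rw [show i + (k+1) = (i+k) + 1 by omega, h, hdig, hx]
        push_cast
        rw [pow_succ]; ring
      refine ⟨hx', ?_⟩
      intro j hj1 hj2
      rcases Nat.lt_or_ge j (k+1) with h | h
      · exact hd j hj1 (by omega)
      · have : j = k + 1 := by omega
        subst this
        rw [show i + (k+1) = i + k + 1 by omega]
        exact hdig

lemma F_strict (m : ℕ) {a b : ℝ} (ha : 1 < a) (hab : a < b) :
    a ^ m * (a - 1) < b ^ m * (b - 1) := by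
  have h1 : a ^ m ≤ b ^ m := pow_le_pow_left₀ (by linarith) hab.le m
  have h2 : 0 < a ^ m := pow_pos (by linarith) m
  nlinarith

lemma lt_iff (m : ℕ) {β c : ℝ} (hβ : 1 < β) (hc : 1 < c)
    (hcv : c ^ m * (c - 1) = 1) :
    β ^ m * (β - 1) < 1 ↔ β < c := by
  constructor
  · intro h
    by_contra hle
    push_neg at hle
    rcases eq_or_lt_of_le hle with heq | hlt
    · rw [heq] at hcv; linarith
    · have := F_strict m hc hlt; linarith
  · intro h
    calc β ^ m * (β - 1) < c ^ m * (c - 1) := F_strict m hβ h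
      _ = 1 := hcv

lemma inv_val (m : ℕ) (hm : 1 ≤ m) {s : ℝ} (hs0 : 0 < s) (hs1 : s < 1)
    (hroot : -1 + s + s ^ m = 0) :
    (s⁻¹) ^ (m - 1) * (s⁻¹ - 1) = 1 := by
  have hsne : s ≠ 0 := ne_of_gt hs0
  have h : s ^ m = 1 - s := by linarith
  obtain ⟨l, rfl⟩ : ∃ l, m = l + 1 := ⟨m - 1, by omega⟩
  have e1 : (s⁻¹) ^ l * s ^ l = 1 := by
    rw [← mul_pow, inv_mul_cancel₀ hsne, one_pow]
  have e2 : (s⁻¹ - 1) * s = 1 - s := by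
    field_simp
  have key : (s⁻¹) ^ l * (s⁻¹ - 1) = (1 - s) / s ^ (l+1) := by
    rw [eq_div_iff (pow_ne_zero _ hsne), pow_succ]
    calc (s⁻¹) ^ l * (s⁻¹ - 1) * (s ^ l * s) = ((s⁻¹) ^ l * s ^ l) * ((s⁻¹ - 1) * s) := by ring
      _ = 1 * (1 - s) := by rw [e1, e2]
      _ = 1 - s := one_mul _
  rw [show (l + 1) - 1 = l from rfl, key, ← h]
  exact div_self (pow_ne_zero _ hsne)

lemma after_one (β : ℝ) (hβ1 : 1 < β) (n : ℕ) (hF : β ^ (n-1) * (β - 1) < 1)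
    (i : ℕ) (hi : 1 ≤ i) (hti : renyiDigit β i = 1) :
    ∀ j : ℕ, 1 ≤ j → j ≤ n - 1 → renyiDigit β (i + j) = 0 := by
  obtain ⟨k, rfl⟩ : ∃ k, i = k + 1 := ⟨i - 1, by omega⟩
  have hx : (betaT β)^[k+1] 1 = β * (betaT β)^[k] 1 - 1 := by
    rw [orbit_rec, hti]; norm_num
  have hle : (betaT β)^[k+1] 1 ≤ β - 1 := by
    rw [hx]
    have h1 := orbit_le_one β k
    have h0 := orbit_nonneg β k
    nlinarith
  have hlt : ∀ j : ℕ, j ≤ n - 1 → β ^ j * (betaT β)^[k+1] 1 < 1 := by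
    intro j hj
    have hb1 : β ^ j * (betaT β)^[k+1] 1 ≤ β ^ j * (β - 1) :=
      mul_le_mul_of_nonneg_left hle (pow_nonneg (by linarith) j)
    have hb2 : β ^ j * (β - 1) ≤ β ^ (n-1) * (β - 1) :=
      mul_le_mul_of_nonneg_right (pow_le_pow_right₀ hβ1.le hj) (by linarith)
    linarith
  exact (zeros β (by linarith) (k+1) (n-1) hlt).2

end RenyiAux

open RenyiAux in
theorem renyi_expansion_characterization
    (θ : ℕ → ℝ)
    (hθ : ∀ n : ℕ, 2 ≤ n → θ n ∈ Set.Ioo (0 : ℝ) 1 ∧ -1 + θ n + θ n ^ n = 0)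
    (n : ℕ) (hn : 2 ≤ n)
    (β : ℝ) (hβ1 : 1 < β) (hβ2 : β ≤ (1 + Real.sqrt 5) / 2) :
    ((θ (n + 1))⁻¹ ≤ β ∧ β < (θ n)⁻¹) ↔
      (renyiDigit β 1 = 1 ∧
       (∀ i : ℕ, 2 ≤ i → i ≤ n → renyiDigit β i = 0) ∧
       renyiDigit β (n + 1) = 1 ∧
       (∀ i : ℕ, 1 ≤ i → renyiDigit β i = 0 ∨ renyiDigit β i = 1) ∧
       (∀ i j : ℕ, n + 1 ≤ i → i < j → renyiDigit β i = 1 → renyiDigit β j = 1 →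
         (∀ k : ℕ, i < k → k < j → renyiDigit β k = 0) → n ≤ j - i)) := by
  obtain ⟨⟨hs0, hs1⟩, hsroot⟩ := hθ n hn
  obtain ⟨⟨ht0, ht1⟩, htroot⟩ := hθ (n+1) (by omega)
  have hβ2' : β < 2 := by
    have h5 : Real.sqrt 5 < 3 := by
      nlinarith [Real.sq_sqrt (show (0:ℝ) ≤ 5 by norm_num), Real.sqrt_nonneg 5]
    linarith
  have hs_inv : 1 < (θ n)⁻¹ := (one_lt_inv₀ hs0).mpr hs1
  have ht_inv : 1 < (θ (n+1))⁻¹ := (one_lt_inv₀ ht0).mpr ht1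
  have hsv : ((θ n)⁻¹) ^ (n - 1) * ((θ n)⁻¹ - 1) = 1 :=
    inv_val n (by omega) hs0 hs1 hsroot
  have htv : ((θ (n+1))⁻¹) ^ n * ((θ (n+1))⁻¹ - 1) = 1 := by
    have h := inv_val (n+1) (by omega) ht0 ht1 htroot
    simpa using h
  have hiff1 : β < (θ n)⁻¹ ↔ β ^ (n-1) * (β - 1) < 1 :=
    (lt_iff (n-1) hβ1 hs_inv hsv).symm
  have hiff2 : (θ (n+1))⁻¹ ≤ β ↔ 1 ≤ β ^ n * (β - 1) := by
    rw [← not_lt, ← (lt_iff n hβ1 ht_inv htv), not_lt]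
  have hfl : (⌊β⌋ : ℤ) = 1 :=
    Int.floor_eq_iff.mpr ⟨by push_cast; linarith, by push_cast; linarith⟩
  have hd1 : renyiDigit β 1 = 1 := by
    rw [renyiDigit]; simpa using hfl
  have hx1 : (betaT β)^[1] 1 = β - 1 := by
    rw [Function.iterate_one, betaT, mul_one, Int.fract, hfl]
    norm_num
  have hpow : β ^ n = β * β ^ (n - 1) := by
    conv_lhs => rw [show n = (n-1)+1 by omega]
    rw [pow_succ']
  constructor
  · rintro ⟨hge, hlt⟩
    have hF : β ^ (n-1) * (β - 1) < 1 := hiff1.mp hlt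
    have hG : 1 ≤ β ^ n * (β - 1) := hiff2.mp hge
    have hlt1 : ∀ j : ℕ, j ≤ n - 1 → β ^ j * (betaT β)^[1] 1 < 1 := by
      intro j hj
      rw [hx1]
      have hb2 : β ^ j * (β - 1) ≤ β ^ (n-1) * (β - 1) :=
        mul_le_mul_of_nonneg_right (pow_le_pow_right₀ hβ1.le hj) (by linarith)
      linarith
    refine ⟨hd1, ?_, ?_, ?_, ?_⟩
    · intro i h2 hin
      have h := after_one β hβ1 n hF 1 le_rfl hd1 (i-1) (by omega) (by omega)
      rwa [show 1 + (i-1) = i by omega] at h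
    · have hz := zeros β (by linarith) 1 (n-1) hlt1
      have hxn : (betaT β)^[n] 1 = β ^ (n-1) * (β - 1) := by
        have h := hz.1
        rw [hx1] at h
        rwa [show 1 + (n-1) = n by omega] at h
      rw [digit_succ, hxn]
      have hval : β * (β ^ (n-1) * (β - 1)) = β ^ n * (β - 1) := by
        rw [hpow]; ring
      rw [hval]
      refine Int.floor_eq_iff.mpr ⟨by push_cast; linarith, ?_⟩
      push_cast
      have : β ^ n * (β - 1) = β * (β ^ (n-1) * (β-1)) := by rw [hpow]; ring
      nlinarith
    · intro i hi
      obtain ⟨k, rfl⟩ : ∃ k, i = k + 1 := ⟨i - 1, by omega⟩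
      rw [digit_succ]
      have h0 : 0 ≤ β * (betaT β)^[k] 1 := mul_nonneg (by linarith) (orbit_nonneg β k)
      have h2 : β * (betaT β)^[k] 1 < 2 := by
        have hle := orbit_le_one β k
        have hnn := orbit_nonneg β k
        nlinarith
      have hf0 : 0 ≤ ⌊β * (betaT β)^[k] 1⌋ := Int.floor_nonneg.mpr h0
      have hf2 : ⌊β * (betaT β)^[k] 1⌋ < 2 := Int.floor_lt.mpr (by exact_mod_cast h2)
      omega
    · intro i j hni hij hti htj hk
      by_contra hcon
      push_neg at hcon
      have hz := after_one β hβ1 n hF i (by omega) hti (j - i) (by omega) (by omega)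
      rw [show i + (j - i) = j by omega] at hz
      rw [hz] at htj
      exact absurd htj (by norm_num)
  · rintro ⟨hd1', hzero, hdn1, hbin, hgap⟩
    have hxn : ∀ i : ℕ, 1 ≤ i → i ≤ n → (betaT β)^[i] 1 = β ^ (i-1) * (β - 1) := by
      intro i
      induction i with
      | zero => intro h1 _; omega
      | succ k ih =>
        intro h1 h2
        rcases Nat.eq_zero_or_pos k with hk0 | hk1
        · subst hk0
          simpa using hx1
        · have hxk := ih (by omega) (by omega)
          rw [orbit_rec, hzero (k+1) (by omega) h2, hxk]
          push_cast
          rw [show β ^ k = β * β ^ (k-1) by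
            conv_lhs => rw [show k = (k-1)+1 by omega]
            rw [pow_succ']]
          ring
    have hxnval : (betaT β)^[n] 1 = β ^ (n-1) * (β - 1) := hxn n (by omega) le_rfl
    have hlt' : β ^ (n-1) * (β - 1) < 1 := by
      have h := orbit_lt_one β n (by omega)
      rwa [hxnval] at h
    have hge' : 1 ≤ β ^ n * (β - 1) := by
      rw [digit_succ, hxnval] at hdn1
      have h1 : ((1:ℤ) : ℝ) ≤ β * (β ^ (n-1) * (β - 1)) :=
        Int.le_floor.mp (le_of_eq hdn1.symm)
      push_cast at h1
      calc (1:ℝ) ≤ β * (β ^ (n-1) * (β - 1)) := h1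
        _ = β ^ n * (β - 1) := by rw [hpow]; ring
    exact ⟨hiff2.mpr hge', hiff1.mpr hlt'⟩
end

section
/- Let β with 1 < β < (1+√5)/2 be a reciprocal algebraic integer. Then the digit sequence (t_i)_{i≥1} of the Rényi β-expansion of 1 has infinitely many nonzero terms; equivalently, the Parry Upper function f_β is not a polynomial (β is not a simple Parry number). -/
/-- let `β ∈ (1, (1+√5)/2)` be a reciprocal algebraic integer. Then the
digit sequence `(t_i)_{i ≥ 1}` of the Rényi β-expansion of `1` has infinitely many
nonzero terms; equivalently the Parry Upper function `f_β` is not a polynomial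
(`β` is not a simple Parry number). -/
theorem reciprocal_renyi_expansion_infinite
    (β : ℝ) (hβ1 : 1 < β) (hβ2 : β < (1 + Real.sqrt 5) / 2)
    (hint : IsIntegral ℤ β)
    (hrec : (minpoly ℚ β).reverse = minpoly ℚ β) :
    ∀ N : ℕ, ∃ i : ℕ, N ≤ i ∧ 1 ≤ i ∧ renyiDigit β i ≠ 0 := by
  by_contra h
  push_neg at h
  obtain ⟨N, hN⟩ := h
  have hβ0 : (0:ℝ) < β := lt_trans one_pos hβ1
  have hβne : β ≠ 0 := ne_of_gt hβ0
  set M := max N 1 with hM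
  have hM1 : 1 ≤ M := le_max_right _ _
  -- basic facts about iterates
  have hnonneg : ∀ k : ℕ, 0 ≤ (betaT β)^[k] 1 := by
    intro k
    cases k with
    | zero => simp
    | succ n =>
      rw [Function.iterate_succ_apply']
      exact Int.fract_nonneg _
  have hlt1 : ∀ k : ℕ, 1 ≤ k → (betaT β)^[k] 1 < 1 := by
    intro k hk
    obtain ⟨n, rfl⟩ := Nat.exists_eq_add_of_le hk
    rw [add_comm, Function.iterate_succ_apply']
    exact Int.fract_lt_one _
  -- recurrence
  have hrecur : ∀ k : ℕ, (betaT β)^[k+1] 1 = β * (betaT β)^[k] 1 - (renyiDigit β (k+1) : ℝ) := by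
    intro k
    rw [Function.iterate_succ_apply']
    simp only [betaT, renyiDigit, Nat.add_sub_cancel, Int.fract]
  -- digits are nonnegative
  have hdig_nonneg : ∀ i : ℕ, 0 ≤ renyiDigit β i := by
    intro i
    have := mul_nonneg hβ0.le (hnonneg (i-1))
    exact Int.le_floor.2 (by simpa using this)
  -- digits vanish from M+1 on
  have hzero : ∀ k : ℕ, M ≤ k → renyiDigit β (k+1) = 0 := by
    intro k hk
    exact hN (k+1) (le_trans (le_max_left _ _) (le_trans hk (Nat.le_succ k)))
      (le_trans hM1 (le_trans hk (Nat.le_succ k)))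
  -- so T^[M+k] 1 = β^k * T^[M] 1
  have hgeom : ∀ k : ℕ, (betaT β)^[M + k] 1 = β^k * (betaT β)^[M] 1 := by
    intro k
    induction k with
    | zero => simp
    | succ n ih =>
      have h1 := hrecur (M + n)
      rw [hzero (M+n) (Nat.le_add_right _ _)] at h1
      rw [show M + (n+1) = (M+n)+1 from rfl, h1, ih]
      push_cast
      ring
  -- T^[M] 1 = 0
  have hxzero : (betaT β)^[M] 1 = 0 := by
    by_contra hx
    have hxpos : 0 < (betaT β)^[M] 1 := lt_of_le_of_ne (hnonneg M) (Ne.symm hx)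
    obtain ⟨k, hk⟩ := pow_unbounded_of_one_lt (((betaT β)^[M] 1)⁻¹) hβ1
    have h2 : (betaT β)^[M+k] 1 < 1 := hlt1 _ (le_trans hM1 (Nat.le_add_right _ _))
    rw [hgeom k] at h2
    have h3 : 1 < β^k * (betaT β)^[M] 1 := by
      have h4 := mul_lt_mul_of_pos_right hk hxpos
      rwa [inv_mul_cancel₀ (ne_of_gt hxpos)] at h4
    linarith
  -- the expansion identity: β^k = sum + T^[k] 1
  have hexp : ∀ k : ℕ, (betaT β)^[k] 1 =
      β^k - ∑ i ∈ Finset.range k, (renyiDigit β (k - i) : ℝ) * β^i := by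
    intro k
    induction k with
    | zero => simp
    | succ n ih =>
      rw [hrecur n, ih, Finset.sum_range_succ']
      simp only [Nat.succ_sub_succ_eq_sub, Nat.sub_zero, pow_zero, mul_one]
      have hs : ∑ x ∈ Finset.range n, (renyiDigit β (n - x) : ℝ) * β ^ (x+1)
          = β * ∑ x ∈ Finset.range n, (renyiDigit β (n - x) : ℝ) * β ^ x := by
        rw [Finset.mul_sum]
        exact Finset.sum_congr rfl fun i _ => by ring
      rw [hs]
      ring
  -- polynomial Q
  set P := minpoly ℚ β with hP
  set Q : Polynomial ℚ := Polynomial.X ^ M -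
      ∑ i ∈ Finset.range M, Polynomial.C ((renyiDigit β (M - i) : ℚ)) * Polynomial.X ^ i with hQ
  have haevalQ : ∀ x : ℝ, (Polynomial.aeval x) Q =
      x^M - ∑ i ∈ Finset.range M, (renyiDigit β (M - i) : ℝ) * x^i := by
    intro x
    simp [hQ]
  have hQβ : (Polynomial.aeval β) Q = 0 := by
    rw [haevalQ]
    have := hexp M
    rw [hxzero] at this
    linarith
  have hβQ : IsIntegral ℚ β := hint.tower_top
  have hdvd : P ∣ Q := minpoly.dvd ℚ β hQβ
  -- 1/β is a root of P
  have : Invertible β := invertibleOfNonzero hβne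
  have hPβ : (Polynomial.aeval β) P = 0 := minpoly.aeval ℚ β
  have hPinv : (Polynomial.aeval (⅟β)) P = 0 := by
    have := (Polynomial.eval₂_reverse_eq_zero_iff (algebraMap ℚ ℝ) β P).2 ?_
    · rw [hrec] at this
      simpa [Polynomial.aeval_def] using this
    · simpa [Polynomial.aeval_def] using hPβ
  have hinv : (⅟β : ℝ) = β⁻¹ := invOf_eq_inv β
  have hQinv : (Polynomial.aeval (β⁻¹ : ℝ)) Q = 0 := by
    obtain ⟨R, hR⟩ := hdvd
    rw [hR, map_mul]
    rw [hinv] at hPinv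
    rw [hPinv, zero_mul]
  -- turn into real identity
  rw [haevalQ] at hQinv
  have hkey : (1:ℝ) = ∑ i ∈ Finset.range M, (renyiDigit β (M - i) : ℝ) * β^(M-i) := by
    have hpow : (0:ℝ) < β^M := pow_pos hβ0 M
    have h1 : (β⁻¹)^M = ∑ i ∈ Finset.range M, (renyiDigit β (M - i) : ℝ) * (β⁻¹)^i := by
      linarith
    have h2 := congrArg (· * β^M) h1
    rw [inv_pow, inv_mul_cancel₀ (ne_of_gt hpow), Finset.sum_mul] at h2
    rw [h2]
    apply Finset.sum_congr rfl
    intro i hi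
    have hile : i ≤ M := le_of_lt (Finset.mem_range.1 hi)
    rw [mul_assoc, inv_pow, pow_sub₀ β hβne hile]; ring
  -- contradiction: the sum is ≥ t_1 * β > 1
  have hterm : ((renyiDigit β 1 : ℝ)) * β^1 ≤ ∑ i ∈ Finset.range M, (renyiDigit β (M - i) : ℝ) * β^(M-i) := by
    have hmem : M - 1 ∈ Finset.range M := Finset.mem_range.2 (by omega)
    have := Finset.single_le_sum (f := fun i => (renyiDigit β (M - i) : ℝ) * β^(M-i))
      (fun i _ => mul_nonneg (by exact_mod_cast hdig_nonneg _) (le_of_lt (pow_pos hβ0 _))) hmem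
    have hMM : M - (M - 1) = 1 := by omega
    beta_reduce at this
    rwa [hMM] at this
  have ht1 : (1:ℤ) ≤ renyiDigit β 1 := by
    simp only [renyiDigit]
    norm_num
    rw [Int.le_floor]
    push_cast
    linarith
  have : (1:ℝ) * β ≤ (renyiDigit β 1 : ℝ) * β^1 := by
    rw [pow_one]
    apply mul_le_mul_of_nonneg_right _ hβ0.le
    exact_mod_cast ht1
  linarith
end

section
/- Let β > 1 be a real number. For every complex z with |z| < 1, the series f_β(z) = −1 + Σ_{i≥1} t_i z^i and Σ_{n≥0} T_β^n(1) z^n converge absolutely and satisfy f_β(z) = −(1 − βz)·Σ_{n≥0} T_β^n(1) z^n. Moreover f_β(1/β) = 0, the derivative satisfies f_β′(1/β) > 0 (so 1/β is a simple zero of f_β), and f_β has no zero in the closed disk |z| ≤ 1/β other than z = 1/β. -/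
/-- Coefficients of the Parry Upper function `f_β(z) = −1 + Σ_{i≥1} t_i z^i`:
coefficient `0` is `−1`, and for `i ≥ 1` the coefficient `t_i = ⌊β·T_β^{i−1}(1)⌋`. -/
noncomputable def puCoeff (β : ℝ) : ℕ → ℤ
  | 0 => -1
  | (i + 1) => ⌊β * (betaT β)^[i] 1⌋

lemma xm_mem (β : ℝ) (m : ℕ) :
    0 ≤ (betaT β)^[m] 1 ∧ (betaT β)^[m] 1 ≤ 1 := by
  cases m with
  | zero => simp
  | succ i =>
    rw [Function.iterate_succ_apply']
    exact ⟨Int.fract_nonneg _, (Int.fract_lt_one _).le⟩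

lemma recurr (β : ℝ) (i : ℕ) :
    β * (betaT β)^[i] 1 = (puCoeff β (i + 1) : ℝ) + (betaT β)^[i + 1] 1 := by
  rw [Function.iterate_succ_apply']
  show β * _ = (⌊β * (betaT β)^[i] 1⌋ : ℝ) + Int.fract (β * (betaT β)^[i] 1)
  rw [Int.floor_add_fract]

lemma tcoeff_nonneg (β : ℝ) (hβ : 1 < β) (i : ℕ) : (0 : ℝ) ≤ (puCoeff β (i + 1) : ℝ) := by
  show (0:ℝ) ≤ ((⌊β * (betaT β)^[i] 1⌋ : ℤ) : ℝ)
  have h := (xm_mem β i).1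
  have h2 : (0:ℝ) ≤ β * (betaT β)^[i] 1 := mul_nonneg (by linarith) h
  exact_mod_cast Int.le_floor.2 (by exact_mod_cast h2)

lemma tcoeff_le (β : ℝ) (hβ : 1 < β) (i : ℕ) : (puCoeff β (i + 1) : ℝ) ≤ β := by
  show ((⌊β * (betaT β)^[i] 1⌋ : ℤ) : ℝ) ≤ β
  have h := xm_mem β i
  calc ((⌊β * (betaT β)^[i] 1⌋ : ℤ) : ℝ) ≤ β * (betaT β)^[i] 1 := Int.floor_le _
    _ ≤ β * 1 := by nlinarith [h.1, h.2]
    _ = β := mul_one β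

lemma coeff_abs_le (β : ℝ) (hβ : 1 < β) (i : ℕ) : |(puCoeff β i : ℝ)| ≤ β := by
  cases i with
  | zero => simp [puCoeff]; linarith
  | succ i =>
    rw [abs_of_nonneg (tcoeff_nonneg β hβ i)]
    exact tcoeff_le β hβ i

lemma abs_summable_x (β : ℝ) (z : ℂ) (hz : ‖z‖ < 1) :
    Summable (fun m : ℕ => ‖(((betaT β)^[m] 1 : ℝ) : ℂ) * z ^ m‖) := by
  refine Summable.of_nonneg_of_le (fun n => (norm_nonneg _)) (fun n => ?_)
    (summable_geometric_of_lt_one (norm_nonneg z) hz)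
  rw [norm_mul, norm_pow, Complex.norm_real, Real.norm_eq_abs, abs_of_nonneg (xm_mem β n).1]
  exact mul_le_of_le_one_left (pow_nonneg (norm_nonneg z) n) (xm_mem β n).2

lemma abs_summable_c (β : ℝ) (hβ : 1 < β) (z : ℂ) (hz : ‖z‖ < 1) :
    Summable (fun i : ℕ => ‖(puCoeff β i : ℂ) * z ^ i‖) := by
  refine Summable.of_nonneg_of_le (fun n => (norm_nonneg _)) (fun n => ?_)
    ((summable_geometric_of_lt_one (norm_nonneg z) hz).mul_left β)
  rw [norm_mul, norm_pow]
  have h1 : ‖(puCoeff β n : ℂ)‖ = |(puCoeff β n : ℝ)| := by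
    rw [show ((puCoeff β n : ℤ) : ℂ) = (((puCoeff β n : ℤ) : ℝ) : ℂ) by push_cast; ring,
      Complex.norm_real, Real.norm_eq_abs]
  rw [h1]
  exact mul_le_mul_of_nonneg_right (coeff_abs_le β hβ n)
    (pow_nonneg (norm_nonneg z) n)

lemma key_hasSum (β : ℝ) (hβ : 1 < β) (z : ℂ) (hz : ‖z‖ < 1) :
    HasSum (fun i : ℕ => (puCoeff β i : ℂ) * z ^ i)
      (-(1 - (β : ℂ) * z) * ∑' m : ℕ, (((betaT β)^[m] 1 : ℝ) : ℂ) * z ^ m) := by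
  have hsx : Summable (fun m : ℕ => (((betaT β)^[m] 1 : ℝ) : ℂ) * z ^ m) := by
    apply Summable.of_norm
    exact abs_summable_x β z hz
  set S := ∑' m : ℕ, (((betaT β)^[m] 1 : ℝ) : ℂ) * z ^ m with hSdef
  have hS : HasSum (fun m : ℕ => (((betaT β)^[m] 1 : ℝ) : ℂ) * z ^ m) S := hsx.hasSum
  have h1 : HasSum (fun m : ℕ => (((betaT β)^[m + 1] 1 : ℝ) : ℂ) * z ^ (m + 1)) (S - 1) := by
    refine (hasSum_nat_add_iff (f := fun m : ℕ => (((betaT β)^[m] 1 : ℝ) : ℂ) * z ^ m) 1).2 ?_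
    simpa using hS
  have h2 : HasSum (fun m : ℕ => (β : ℂ) * z * ((((betaT β)^[m] 1 : ℝ) : ℂ) * z ^ m))
      ((β : ℂ) * z * S) := hS.mul_left _
  have h3 := h2.sub h1
  have heq : ∀ m : ℕ, (β : ℂ) * z * ((((betaT β)^[m] 1 : ℝ) : ℂ) * z ^ m)
      - (((betaT β)^[m + 1] 1 : ℝ) : ℂ) * z ^ (m + 1)
      = (puCoeff β (m + 1) : ℂ) * z ^ (m + 1) := by
    intro m
    have hr : (puCoeff β (m + 1) : ℝ) = β * (betaT β)^[m] 1 - (betaT β)^[m + 1] 1 := by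
      have := recurr β m; linarith
    have hrc : ((puCoeff β (m + 1) : ℤ) : ℂ)
        = (β : ℂ) * (((betaT β)^[m] 1 : ℝ) : ℂ) - (((betaT β)^[m + 1] 1 : ℝ) : ℂ) := by
      rw [show ((puCoeff β (m + 1) : ℤ) : ℂ) = (((puCoeff β (m + 1) : ℤ) : ℝ) : ℂ) by push_cast; ring, hr]
      push_cast; ring
    rw [hrc]; ring
  simp only [heq] at h3
  have h5 := (hasSum_nat_add_iff (f := fun i : ℕ => (puCoeff β i : ℂ) * z ^ i) 1).1 h3
  convert h5 using 1
  · rfl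
  simp [puCoeff]
  ring

lemma deriv_part (β : ℝ) (hβ : 1 < β) :
    ∃ d : ℝ, 0 < d ∧
      HasDerivAt (fun x : ℝ => ∑' i : ℕ, (puCoeff β i : ℝ) * x ^ i) d β⁻¹ := by
  have hβ0 : (0:ℝ) < β := by linarith
  have hinv : (0:ℝ) < β⁻¹ := by positivity
  have hinv1 : β⁻¹ < 1 := by
    rw [inv_lt_one_iff₀]; right; exact hβ
  set r : ℝ := (β⁻¹ + 1) / 2 with hr
  have hr0 : 0 < r := by positivity
  have hr1 : r < 1 := by rw [hr]; linarith
  have hir : β⁻¹ < r := by rw [hr]; linarith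
  set g : ℕ → ℝ → ℝ := fun n x => (puCoeff β n : ℝ) * x ^ n with hg
  set g' : ℕ → ℝ → ℝ := fun n x => (puCoeff β n : ℝ) * ((n : ℝ) * x ^ (n - 1)) with hg'
  set u : ℕ → ℝ := fun n => β * ((n : ℝ) * r ^ (n - 1)) with hu
  have husum : Summable u := by
    rw [← summable_nat_add_iff 1]
    have s1 : Summable (fun n : ℕ => (n : ℝ) * r ^ n) := by
      simpa using summable_pow_mul_geometric_of_norm_lt_one 1
        (r := r) (by rw [Real.norm_eq_abs, abs_of_pos hr0]; exact hr1)
    have s2 : Summable (fun n : ℕ => r ^ n) := summable_geometric_of_lt_one hr0.le hr1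
    refine ((s1.add s2).mul_left β).congr (fun n => ?_)
    simp only [hu]
    push_cast
    ring_nf
  have hgd : ∀ (n : ℕ), ∀ y ∈ Metric.ball (0:ℝ) r, HasDerivAt (g n) (g' n y) y := by
    intro n y _
    exact (hasDerivAt_pow n y).const_mul ((puCoeff β n : ℝ))
  have hgb : ∀ (n : ℕ), ∀ y ∈ Metric.ball (0:ℝ) r, ‖g' n y‖ ≤ u n := by
    intro n y hy
    have hyr : |y| ≤ r := by
      rw [Metric.mem_ball, Real.dist_eq, sub_zero] at hy; exact hy.le
    simp only [hg', hu, Real.norm_eq_abs, abs_mul, abs_pow, Nat.abs_cast]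
    have hb0 : (0:ℝ) ≤ β := by linarith
    refine mul_le_mul (coeff_abs_le β hβ n) ?_ (by positivity) hb0
    exact mul_le_mul_of_nonneg_left (pow_le_pow_left₀ (abs_nonneg y) hyr _) (Nat.cast_nonneg n)
  have hmem : β⁻¹ ∈ Metric.ball (0:ℝ) r := by
    rw [Metric.mem_ball, Real.dist_eq, sub_zero, abs_of_pos hinv]; exact hir
  have hg0 : Summable (fun n => g n β⁻¹) := by
    apply Summable.of_norm
    refine Summable.of_nonneg_of_le (fun n => norm_nonneg _) (fun n => ?_)
      ((summable_geometric_of_lt_one hinv.le hinv1).mul_left β)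
    simp only [hg, Real.norm_eq_abs, abs_mul, abs_pow, abs_of_pos hinv]
    exact mul_le_mul_of_nonneg_right (coeff_abs_le β hβ n) (by positivity)
  have hder := hasDerivAt_tsum_of_isPreconnected husum Metric.isOpen_ball
    (convex_ball (0:ℝ) r).isPreconnected hgd hgb hmem hg0 hmem
  refine ⟨∑' n, g' n β⁻¹, ?_, hder⟩
  have hsum' : Summable (fun n => g' n β⁻¹) :=
    Summable.of_norm_bounded husum (fun n => hgb n β⁻¹ hmem)
  have hnn : ∀ j : ℕ, j ≠ 1 → 0 ≤ g' j β⁻¹ := by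
    intro j _
    cases j with
    | zero => simp [hg']
    | succ i =>
      have := tcoeff_nonneg β hβ i
      simp only [hg']
      positivity
  have hle := Summable.le_tsum hsum' 1 hnn
  have h1 : (1:ℝ) ≤ g' 1 β⁻¹ := by
    have : (1:ℤ) ≤ puCoeff β 1 := by
      show (1:ℤ) ≤ ⌊β * (betaT β)^[0] 1⌋
      rw [Function.iterate_zero_apply, mul_one]
      exact Int.le_floor.2 (by exact_mod_cast hβ.le)
    simp only [hg']
    norm_num
    exact_mod_cast this
  linarith

lemma inv_abs_lt (β : ℝ) (hβ : 1 < β) : ‖(β : ℂ)⁻¹‖ < 1 := by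
  have hβ0 : (0:ℝ) < β := by linarith
  rw [norm_inv, Complex.norm_real, Real.norm_eq_abs, abs_of_pos hβ0]
  rw [inv_lt_one_iff₀]; right; exact hβ

lemma pu_at_inv (β : ℝ) (hβ : 1 < β) :
    (∑' i : ℕ, (puCoeff β i : ℂ) * ((β : ℂ)⁻¹) ^ i) = 0 := by
  have hβ0 : (0:ℝ) < β := by linarith
  have h := (key_hasSum β hβ _ (inv_abs_lt β hβ)).tsum_eq
  rw [h, mul_inv_cancel₀ (by exact_mod_cast hβ0.ne' : (β:ℂ) ≠ 0)]
  ring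

lemma pu_at_inv_real (β : ℝ) (hβ : 1 < β) :
    (∑' i : ℕ, (puCoeff β i : ℝ) * (β⁻¹) ^ i) = 0 := by
  rw [← Complex.ofReal_eq_zero, Complex.ofReal_tsum]
  rw [← pu_at_inv β hβ]
  congr 1; funext i; push_cast; ring

lemma real_summable_c (β : ℝ) (hβ : 1 < β) :
    Summable (fun i : ℕ => (puCoeff β i : ℝ) * (β⁻¹) ^ i) := by
  have hβ0 : (0:ℝ) < β := by linarith
  have hinv : (0:ℝ) < β⁻¹ := by positivity
  have hinv1 : β⁻¹ < 1 := by rw [inv_lt_one_iff₀]; right; exact hβ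
  apply Summable.of_norm
  refine Summable.of_nonneg_of_le (fun n => norm_nonneg _) (fun n => ?_)
    ((summable_geometric_of_lt_one hinv.le hinv1).mul_left β)
  simp only [Real.norm_eq_abs, abs_mul, abs_pow, abs_of_pos hinv]
  exact mul_le_mul_of_nonneg_right (coeff_abs_le β hβ n) (by positivity)

lemma no_other_zero (β : ℝ) (hβ : 1 < β) (z : ℂ) (hz : ‖z‖ ≤ β⁻¹)
    (hzero : (∑' i : ℕ, (puCoeff β i : ℂ) * z ^ i) = 0) : z = ((β : ℂ))⁻¹ := by
  have hβ0 : (0:ℝ) < β := by linarith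
  have hinv : (0:ℝ) < β⁻¹ := by positivity
  have hinv1 : β⁻¹ < 1 := by rw [inv_lt_one_iff₀]; right; exact hβ
  have hz1 : ‖z‖ < 1 := lt_of_le_of_lt hz hinv1
  -- complex summability
  have hsz : Summable (fun i : ℕ => (puCoeff β i : ℂ) * z ^ i) := by
    apply Summable.of_norm
    exact abs_summable_c β hβ z hz1
  have hszs : Summable (fun i : ℕ => (puCoeff β (i + 1) : ℂ) * z ^ (i + 1)) := by
    exact (summable_nat_add_iff (f := fun i : ℕ => (puCoeff β i : ℂ) * z ^ i) 1).2 hsz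
  -- shifted sum of tail at z equals 1
  have hT : (∑' i : ℕ, (puCoeff β (i + 1) : ℂ) * z ^ (i + 1)) = 1 := by
    have h0 := Summable.tsum_eq_zero_add hsz
    rw [hzero] at h0
    have : ((puCoeff β 0 : ℂ) * z ^ 0) = -1 := by simp [puCoeff]
    rw [this] at h0
    linear_combination -h0
  -- real: tail sum at β⁻¹ equals 1
  have hsreal := real_summable_c β hβ
  have hsreals : Summable (fun i : ℕ => (puCoeff β (i + 1) : ℝ) * (β⁻¹) ^ (i + 1)) :=
    (summable_nat_add_iff (f := fun i : ℕ => (puCoeff β i : ℝ) * (β⁻¹) ^ i) 1).2 hsreal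
  have hR : (∑' i : ℕ, (puCoeff β (i + 1) : ℝ) * (β⁻¹) ^ (i + 1)) = 1 := by
    have h0 := Summable.tsum_eq_zero_add hsreal
    rw [pu_at_inv_real β hβ] at h0
    have : ((puCoeff β 0 : ℝ) * (β⁻¹) ^ 0) = -1 := by simp [puCoeff]
    rw [this] at h0
    linarith
  -- re of tail sum
  have hre : (∑' i : ℕ, ((puCoeff β (i + 1) : ℂ) * z ^ (i + 1)).re) = 1 := by
    rw [← Complex.re_tsum hszs, hT, Complex.one_re]
  set a : ℕ → ℝ := fun i => (puCoeff β (i + 1) : ℝ) * (β⁻¹) ^ (i + 1)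
    - ((puCoeff β (i + 1) : ℂ) * z ^ (i + 1)).re with ha
  have hsB : Summable (fun i : ℕ => ((puCoeff β (i + 1) : ℂ) * z ^ (i + 1)).re) := by
    exact (Complex.hasSum_re hszs.hasSum).summable
  have hsa : Summable a := hsreals.sub hsB
  have hta : (∑' i, a i) = 0 := by
    rw [ha]
    rw [Summable.tsum_sub hsreals hsB, hR, hre]
    ring
  have hann : ∀ j : ℕ, 0 ≤ a j := by
    intro j
    have h1 : ((puCoeff β (j + 1) : ℂ) * z ^ (j + 1)).re
        ≤ (puCoeff β (j + 1) : ℝ) * (β⁻¹) ^ (j + 1) := by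
      calc ((puCoeff β (j + 1) : ℂ) * z ^ (j + 1)).re
          ≤ ‖(puCoeff β (j + 1) : ℂ) * z ^ (j + 1)‖ := Complex.re_le_norm _
        _ = |(puCoeff β (j + 1) : ℝ)| * ‖z‖ ^ (j + 1) := by
            rw [norm_mul, norm_pow]
            congr 1
            rw [show ((puCoeff β (j+1) : ℤ) : ℂ) = (((puCoeff β (j+1) : ℤ) : ℝ) : ℂ) by
              push_cast; ring, Complex.norm_real, Real.norm_eq_abs]
        _ ≤ (puCoeff β (j + 1) : ℝ) * (β⁻¹) ^ (j + 1) := by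
            rw [abs_of_nonneg (tcoeff_nonneg β hβ j)]
            exact mul_le_mul_of_nonneg_left (pow_le_pow_left₀ (norm_nonneg z) hz _)
              (tcoeff_nonneg β hβ j)
    simp only [ha, sub_nonneg]
    exact h1
  have ha0 : a 0 = 0 := by
    have hle := Summable.le_tsum hsa 0 (fun j _ => hann j)
    rw [hta] at hle
    exact le_antisymm hle (hann 0)
  -- extract: c1 * β⁻¹ = re (c1 * z)
  have hc1 : (1:ℝ) ≤ (puCoeff β 1 : ℝ) := by
    have : (1:ℤ) ≤ puCoeff β 1 := by
      show (1:ℤ) ≤ ⌊β * (betaT β)^[0] 1⌋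
      rw [Function.iterate_zero_apply, mul_one]
      exact Int.le_floor.2 (by exact_mod_cast hβ.le)
    exact_mod_cast this
  have hre1 : z.re = β⁻¹ := by
    have h0 : (puCoeff β (0+1) : ℝ) * β⁻¹ ^ (0+1) - ((puCoeff β (0+1) : ℂ) * z ^ (0+1)).re = 0 := ha0
    simp only [zero_add, pow_one] at h0
    have h2 : ((puCoeff β 1 : ℂ) * z).re = (puCoeff β 1 : ℝ) * z.re := by
      rw [show ((puCoeff β 1 : ℤ) : ℂ) = (((puCoeff β 1 : ℤ) : ℝ) : ℂ) by push_cast; ring]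
      rw [Complex.re_ofReal_mul]
    rw [h2] at h0
    have hne : (puCoeff β 1 : ℝ) ≠ 0 := by linarith
    exact (mul_left_cancel₀ hne (by linarith : (puCoeff β 1 : ℝ) * β⁻¹ = (puCoeff β 1 : ℝ) * z.re)).symm
  -- conclude
  have habs : ‖z‖ = β⁻¹ := by
    have := Complex.re_le_norm z
    rw [hre1] at this
    linarith [hz, this]
  have him : z.im = 0 := by
    have h1 : ‖z‖ ^ 2 = z.re * z.re + z.im * z.im := by
      rw [Complex.sq_norm, Complex.normSq_apply]
    rw [habs, hre1] at h1
    nlinarith [sq_nonneg z.im]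
  have : ((β : ℂ))⁻¹ = ((β⁻¹ : ℝ) : ℂ) := by push_cast; ring
  rw [this]
  exact Complex.ext (by rw [hre1]; simp) (by rw [him]; simp)

/-- let `β > 1`. For every `z ∈ ℂ` with `|z| < 1`, the series
`f_β(z) = −1 + Σ_{i≥1} t_i z^i` and `Σ_{n≥0} T_β^n(1)·z^n` converge absolutely and
`f_β(z) = −(1 − βz)·Σ_{n≥0} T_β^n(1)·z^n`. Moreover `f_β(1/β) = 0`, the derivative
of the real function `x ↦ f_β(x)` at `1/β` is positive (so `1/β` is a simple zero),
and `f_β` has no zero in the closed disk `|z| ≤ 1/β` other than `z = 1/β`. -/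
theorem parry_upper_function_basic_properties (β : ℝ) (hβ : 1 < β) :
    (∀ z : ℂ, ‖z‖ < 1 →
      Summable (fun i : ℕ => ‖(puCoeff β i : ℂ) * z ^ i‖) ∧
      Summable (fun m : ℕ => ‖(((betaT β)^[m] 1 : ℝ) : ℂ) * z ^ m‖) ∧
      (∑' i : ℕ, (puCoeff β i : ℂ) * z ^ i)
        = -(1 - (β : ℂ) * z) * ∑' m : ℕ, (((betaT β)^[m] 1 : ℝ) : ℂ) * z ^ m) ∧
    (∑' i : ℕ, (puCoeff β i : ℂ) * ((β : ℂ)⁻¹) ^ i) = 0 ∧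
    (∃ d : ℝ, 0 < d ∧
      HasDerivAt (fun x : ℝ => ∑' i : ℕ, (puCoeff β i : ℝ) * x ^ i) d β⁻¹) ∧
    (∀ z : ℂ, ‖z‖ ≤ β⁻¹ →
      (∑' i : ℕ, (puCoeff β i : ℂ) * z ^ i) = 0 → z = ((β : ℂ))⁻¹) := by
  exact ⟨fun z hz => ⟨abs_summable_c β hβ z hz, abs_summable_x β z hz,
      (key_hasSum β hβ z hz).tsum_eq⟩,
    pu_at_inv β hβ, deriv_part β hβ, fun z hz h => no_other_zero β hβ z hz h⟩
end

section
/- Let β with 1 < β < (1+√5)/2. (i) If β is not a simple Parry number, then for every sequence γ_k ∈ (1, (1+√5)/2) with γ_k → β, the functions f_{γ_k} converge to f_β uniformly on every compact subset of the open unit disk. (ii) If β is a simple Parry number and N is the smallest positive integer with T_β^N(1) = 0, then f_γ → f_β uniformly on compact subsets of |z| < 1 as γ → β from the right, while f_γ(z) → f_β(z)/(1 − z^N) uniformly on compact subsets of |z| < 1 as γ → β from the left. -/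
open Filter

/-- The Parry Upper function `f_β(z) = −1 + Σ_{i≥1} t_i z^i` on the open unit disk. -/
noncomputable def parryUpper (β : ℝ) (z : ℂ) : ℂ := ∑' i : ℕ, (puCoeff β i : ℂ) * z ^ i

/-! ### basic facts about the orbit -/

lemma X_nonneg (γ : ℝ) (i : ℕ) : 0 ≤ (betaT γ)^[i] 1 := by
  cases i with
  | zero => norm_num
  | succ n => rw [Function.iterate_succ_apply']; exact Int.fract_nonneg _

lemma X_le_one (γ : ℝ) (i : ℕ) : (betaT γ)^[i] 1 ≤ 1 := by
  cases i with
  | zero => norm_num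
  | succ n => rw [Function.iterate_succ_apply']; exact (Int.fract_lt_one _).le

lemma X_lt_one (γ : ℝ) (i : ℕ) (hi : 1 ≤ i) : (betaT γ)^[i] 1 < 1 := by
  obtain ⟨n, rfl⟩ := Nat.exists_eq_add_of_le hi
  rw [add_comm, Function.iterate_succ_apply']; exact Int.fract_lt_one _

lemma puCoeff_succ (γ : ℝ) (j : ℕ) : puCoeff γ (j + 1) = ⌊γ * (betaT γ)^[j] 1⌋ := rfl

lemma puCoeff_rec (γ : ℝ) (i : ℕ) :
    γ * (betaT γ)^[i] 1 = (puCoeff γ (i + 1) : ℝ) + (betaT γ)^[i + 1] 1 := by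
  rw [Function.iterate_succ_apply', puCoeff_succ]
  show γ * (betaT γ)^[i] 1 = _ + Int.fract (γ * (betaT γ)^[i] 1)
  rw [Int.floor_add_fract]

lemma puCoeff_abs_le (γ : ℝ) (h1 : 0 < γ) (h2 : γ < 2) (i : ℕ) : |puCoeff γ i| ≤ 1 := by
  cases i with
  | zero => simp [puCoeff]
  | succ n =>
    have h3 := X_nonneg γ n
    have h4 := X_le_one γ n
    have h5 : (0:ℝ) ≤ γ * (betaT γ)^[n] 1 := by positivity
    have h6 : γ * (betaT γ)^[n] 1 < 2 := by nlinarith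
    have hf0 : 0 ≤ ⌊γ * (betaT γ)^[n] 1⌋ := Int.floor_nonneg.mpr h5
    have hf1 : ⌊γ * (betaT γ)^[n] 1⌋ < 2 := by
      rw [Int.floor_lt]; exact_mod_cast h6
    rw [puCoeff_succ, abs_le]
    omega

/-! ### summability -/

lemma summable_norm_aux (c : ℕ → ℤ) (B : ℝ) (hB : ∀ i, |(c i : ℝ)| ≤ B) (z : ℂ)
    (hz : ‖z‖ < 1) : Summable (fun i => ‖(c i : ℂ) * z ^ i‖) := by
  have hz' : ‖z‖ < 1 := hz
  refine Summable.of_nonneg_of_le (fun i => norm_nonneg _) (fun i => ?_)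
    ((summable_geometric_of_lt_one (norm_nonneg z) hz').mul_left B)
  rw [norm_mul, norm_pow]
  have h1 : ‖(c i : ℂ)‖ ≤ B := by rw [Complex.norm_intCast]; exact hB i
  exact mul_le_mul_of_nonneg_right h1 (by positivity)

lemma summable_aux (c : ℕ → ℤ) (B : ℝ) (hB : ∀ i, |(c i : ℝ)| ≤ B) (z : ℂ)
    (hz : ‖z‖ < 1) : Summable (fun i => (c i : ℂ) * z ^ i) :=
  (summable_norm_aux c B hB z hz).of_norm

/-! ### uniform convergence from coefficientwise convergence -/

set_option maxHeartbeats 1000000 in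
lemma tuo_of_coeffs (a : ℕ → ℕ → ℤ) (c : ℕ → ℤ)
    (hba : ∀ k i, |a k i| ≤ 1) (hbc : ∀ i, |c i| ≤ 1)
    (h : ∀ i, ∀ᶠ k in atTop, a k i = c i)
    (K : Set ℂ) (hK : K ⊆ {z : ℂ | ‖z‖ < 1}) (hKc : IsCompact K) :
    TendstoUniformlyOn (fun k z => ∑' i, (a k i : ℂ) * z ^ i)
      (fun z => ∑' i, (c i : ℂ) * z ^ i) atTop K := by
  rcases K.eq_empty_or_nonempty with rfl | hne
  · simp [TendstoUniformlyOn]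
  have hcont : ContinuousOn (fun z : ℂ => ‖z‖) K :=
    continuous_norm.continuousOn
  obtain ⟨z₀, hz₀K, hz₀⟩ := hKc.exists_isMaxOn hne hcont
  set r : ℝ := ‖z₀‖ with hr
  have hr0 : 0 ≤ r := norm_nonneg _
  have hr1 : r < 1 := hK hz₀K
  have hbc' : ∀ i, |((c i : ℝ))| ≤ 1 := by
    intro i; rw [← Int.cast_abs]; exact_mod_cast hbc i
  have hba' : ∀ k i, |((a k i : ℝ))| ≤ 1 := by
    intro k i; rw [← Int.cast_abs]; exact_mod_cast hba k i
  rw [Metric.tendstoUniformlyOn_iff]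
  intro ε hε
  have htend : Tendsto (fun n : ℕ => 2 * r ^ (n + 1) / (1 - r)) atTop (nhds 0) := by
    have h1 : Tendsto (fun n : ℕ => r ^ (n + 1)) atTop (nhds 0) :=
      (tendsto_pow_atTop_nhds_zero_of_lt_one hr0 hr1).comp (tendsto_add_atTop_nat 1)
    have := (h1.const_mul 2).div_const (1 - r)
    simpa using this
  obtain ⟨n, hn⟩ := (htend.eventually (eventually_lt_nhds hε)).exists
  have hev : ∀ᶠ k in atTop, ∀ i ∈ Finset.range (n + 1), a k i = c i :=
    (Finset.range (n + 1)).eventually_all.mpr (fun i _ => h i)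
  filter_upwards [hev] with k hk z hzK
  have hz1 : ‖z‖ < 1 := hK hzK
  have hzr : ‖z‖ ≤ r := hz₀ hzK
  have hzr' : ‖z‖ ≤ r := hzr
  have hsc := summable_aux c 1 hbc' z hz1
  have hsa := summable_aux (a k) 1 (hba' k) z hz1
  rw [dist_eq_norm, ← Summable.tsum_sub hsc hsa]
  have hd : ∀ i, (c i : ℂ) * z ^ i - (a k i : ℂ) * z ^ i = ((c i - a k i : ℤ) : ℂ) * z ^ i := by
    intro i; push_cast; ring
  have hbd : ∀ i, |((c i - a k i : ℤ) : ℝ)| ≤ 2 := by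
    intro i
    push_cast
    calc |(c i : ℝ) - (a k i : ℝ)| ≤ |(c i : ℝ)| + |(a k i : ℝ)| := abs_sub _ _
      _ ≤ 2 := by linarith [hbc' i, hba' k i]
  have hsum_norm : Summable (fun i => ‖((c i - a k i : ℤ) : ℂ) * z ^ i‖) :=
    summable_norm_aux _ 2 hbd z hz1
  calc ‖∑' i, ((c i : ℂ) * z ^ i - (a k i : ℂ) * z ^ i)‖
      = ‖∑' i, ((c i - a k i : ℤ) : ℂ) * z ^ i‖ := by
        congr 1; exact tsum_congr hd
    _ ≤ ∑' i, ‖((c i - a k i : ℤ) : ℂ) * z ^ i‖ := norm_tsum_le_tsum_norm hsum_norm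
    _ = (∑ i ∈ Finset.range (n + 1), ‖((c i - a k i : ℤ) : ℂ) * z ^ i‖)
        + ∑' i, ‖((c (i + (n+1)) - a k (i + (n+1)) : ℤ) : ℂ) * z ^ (i + (n+1))‖ :=
        (Summable.sum_add_tsum_nat_add (n + 1) hsum_norm).symm
    _ = ∑' i, ‖((c (i + (n+1)) - a k (i + (n+1)) : ℤ) : ℂ) * z ^ (i + (n+1))‖ := by
        rw [Finset.sum_eq_zero, zero_add]
        intro i hi
        rw [hk i hi]; simp
    _ ≤ ∑' i : ℕ, 2 * r ^ (i + (n+1)) := by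
        refine Summable.tsum_le_tsum (fun i => ?_) ((summable_nat_add_iff (n+1)).mpr hsum_norm) ?_
        · rw [norm_mul, norm_pow]
          have h1 : ‖((c (i + (n+1)) - a k (i + (n+1)) : ℤ) : ℂ)‖ ≤ 2 := by
            rw [Complex.norm_intCast]; exact hbd _
          have h2 : ‖z‖ ^ (i + (n+1)) ≤ r ^ (i + (n+1)) :=
            pow_le_pow_left₀ (norm_nonneg z) hzr' _
          have h3 : (0:ℝ) ≤ ‖z‖ ^ (i + (n+1)) := by positivity
          nlinarith [norm_nonneg ((c (i + (n+1)) - a k (i + (n+1)) : ℤ) : ℂ)]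
        · have hs : Summable (fun i : ℕ => (2 * r ^ (n+1)) * r ^ i) :=
            (summable_geometric_of_lt_one hr0 hr1).mul_left _
          refine hs.congr (fun i => ?_)
          rw [pow_add]; ring
    _ = 2 * r ^ (n+1) / (1 - r) := by
        have he : (fun i : ℕ => 2 * r ^ (i + (n+1))) = (fun i : ℕ => (2 * r ^ (n+1)) * r ^ i) := by
          funext i; rw [pow_add]; ring
        rw [he, tsum_mul_left, tsum_geometric_of_lt_one hr0 hr1]
        field_simp
    _ < ε := hn

/-! ### the key dynamical lemma -/

lemma key (β : ℝ) (hβ1 : 1 < β) (b : ℕ → ℤ) (y : ℕ → ℝ)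
    (hy0 : y 0 = 1) (hrec : ∀ i, β * y i = b (i + 1) + y (i + 1))
    (hyge : ∀ i, 0 ≤ y i) (hyle : ∀ i, y i ≤ 1)
    (γ : ℕ → ℝ) (hγ0 : ∀ k, 0 < γ k) (hγlim : Tendsto γ atTop (nhds β))
    (side : ((∀ k, β ≤ γ k) ∧ (∀ i, 1 ≤ i → y i < 1)) ∨
            ((∀ k, γ k < β) ∧ (∀ i, 1 ≤ i → 0 < y i)) ∨
            (∀ i, 1 ≤ i → 0 < y i ∧ y i < 1)) :
    ∀ i, Tendsto (fun k => (betaT (γ k))^[i] 1) atTop (nhds (y i)) ∧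
      (∀ᶠ k in atTop,
        ((∀ k', β ≤ γ k') → y i ≤ (betaT (γ k))^[i] 1) ∧
        ((∀ k', γ k' < β) → (betaT (γ k))^[i] 1 ≤ y i ∧
           (1 ≤ i → (betaT (γ k))^[i] 1 < y i))) ∧
      (∀ j, i = j + 1 → ∀ᶠ k in atTop, ⌊γ k * (betaT (γ k))^[j] 1⌋ = b (j + 1)) := by
  intro i
  induction i with
  | zero =>
    refine ⟨by simp [hy0], ?_, by omega⟩
    filter_upwards with k
    simp [hy0]
  | succ i ih =>
    obtain ⟨ihT, ihI, _⟩ := ih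
    set X : ℕ → ℕ → ℝ := fun j k => (betaT (γ k))^[j] 1 with hX
    have hXnn : ∀ j k, 0 ≤ X j k := fun j k => X_nonneg _ _
    have hTmul : Tendsto (fun k => γ k * X i k) atTop (nhds (β * y i)) :=
      hγlim.mul ihT
    have hrec' := hrec i
    have hlow : ∀ᶠ k in atTop, (b (i + 1) : ℝ) ≤ γ k * X i k := by
      rcases eq_or_lt_of_le (hyge (i + 1)) with h0 | h0
      · have hC1 : ∀ k, β ≤ γ k := by
          rcases side with h | h | h
          · exact h.1
          · exact absurd (h.2 (i + 1) (by omega)) (by rw [← h0]; simp)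
          · exact absurd ((h (i + 1) (by omega)).1) (by rw [← h0]; simp)
        filter_upwards [ihI] with k hk
        have h1 : y i ≤ X i k := hk.1 hC1
        have : β * y i ≤ γ k * X i k :=
          mul_le_mul (hC1 k) h1 (hyge i) (hγ0 k).le
        rw [hrec', ← h0] at this
        linarith
      · have : (b (i + 1) : ℝ) < β * y i := by rw [hrec']; linarith
        filter_upwards [hTmul.eventually_const_lt this] with k hk using hk.le
    have hup : ∀ᶠ k in atTop, γ k * X i k < (b (i + 1) : ℝ) + 1 := by
      rcases eq_or_lt_of_le (hyle (i + 1)) with h1 | h1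
      · have hC2 : ∀ k, γ k < β := by
          rcases side with h | h | h
          · exact absurd (h.2 (i + 1) (by omega)) (by rw [h1]; simp)
          · exact h.1
          · exact absurd ((h (i + 1) (by omega)).2) (by rw [h1]; simp)
        filter_upwards [ihI] with k hk
        have hb : β * y i = (b (i+1) : ℝ) + 1 := by rw [hrec', h1]
        rcases Nat.eq_zero_or_pos i with rfl | hi
        · have : X 0 k = 1 := by simp [hX]
          rw [this, mul_one, ← hb, hy0, mul_one]
          exact hC2 k
        · have h2 : X i k < y i := (hk.2 hC2).2 (by omega)
          have : γ k * X i k < β * y i := by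
            calc γ k * X i k ≤ β * X i k :=
                  mul_le_mul_of_nonneg_right (hC2 k).le (hXnn i k)
              _ < β * y i := by
                  apply mul_lt_mul_of_pos_left h2 (by linarith)
          linarith [this, hb.ge]
      · have : β * y i < (b (i + 1) : ℝ) + 1 := by rw [hrec']; linarith
        exact hTmul.eventually_lt_const this
    have hfl : ∀ᶠ k in atTop, ⌊γ k * X i k⌋ = b (i + 1) := by
      filter_upwards [hlow, hup] with k h1 h2
      rw [Int.floor_eq_iff]
      · exact ⟨h1, by exact_mod_cast h2⟩
    have hXs : ∀ᶠ k in atTop, X (i + 1) k = γ k * X i k - (b (i + 1) : ℝ) := by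
      filter_upwards [hfl] with k h1
      have : X (i + 1) k = Int.fract (γ k * X i k) := by
        simp only [hX, Function.iterate_succ_apply']
        rfl
      rw [this, Int.fract, h1]
    refine ⟨?_, ?_, ?_⟩
    · have : Tendsto (fun k => γ k * X i k - (b (i + 1) : ℝ)) atTop (nhds (y (i + 1))) := by
        have := hTmul.sub_const (b (i + 1) : ℝ)
        rwa [hrec', add_sub_cancel_left] at this
      exact this.congr' (by filter_upwards [hXs] with k hk using hk.symm)
    · filter_upwards [ihI, hXs] with k hk hXk
      constructor
      · intro hC1
        have h1 : y i ≤ X i k := hk.1 hC1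
        have : β * y i ≤ γ k * X i k := mul_le_mul (hC1 k) h1 (hyge i) (hγ0 k).le
        show y (i + 1) ≤ X (i + 1) k
        rw [hXk]; rw [hrec'] at this; linarith
      · intro hC2
        have hstrict : γ k * X i k < β * y i := by
          rcases Nat.eq_zero_or_pos i with rfl | hi
          · have h0 : X 0 k = 1 := by simp [hX]
            rw [h0, mul_one, hy0, mul_one]; exact hC2 k
          · have h2 : X i k < y i := (hk.2 hC2).2 (by omega)
            calc γ k * X i k ≤ β * X i k :=
                  mul_le_mul_of_nonneg_right (hC2 k).le (hXnn i k)
              _ < β * y i := mul_lt_mul_of_pos_left h2 (by linarith)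
        have hlt : X (i+1) k < y (i+1) := by
          rw [hXk]; rw [hrec'] at hstrict; linarith
        exact ⟨hlt.le, fun _ => hlt⟩
    · intro j hj
      have hji : j = i := by omega
      subst hji
      exact hfl
/-! ### convergence to `parryUpper β` -/

lemma tuo_to_self (β : ℝ) (hβ1 : 1 < β) (hβ2 : β < 2)
    (γ : ℕ → ℝ) (hγ1 : ∀ k, 1 < γ k) (hγ2 : ∀ k, γ k < 2)
    (hγlim : Tendsto γ atTop (nhds β))
    (hside : (∀ k, β ≤ γ k) ∨ (∀ i, 1 ≤ i → (betaT β)^[i] 1 ≠ 0))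
    (K : Set ℂ) (hK : K ⊆ {z : ℂ | ‖z‖ < 1}) (hKc : IsCompact K) :
    TendstoUniformlyOn (fun k z => parryUpper (γ k) z) (parryUpper β) atTop K := by
  have hside' : ((∀ k, β ≤ γ k) ∧ (∀ i, 1 ≤ i → (betaT β)^[i] 1 < 1)) ∨
      ((∀ k, γ k < β) ∧ (∀ i, 1 ≤ i → 0 < (betaT β)^[i] 1)) ∨
      (∀ i, 1 ≤ i → 0 < (betaT β)^[i] 1 ∧ (betaT β)^[i] 1 < 1) := by
    rcases hside with h | h
    · exact Or.inl ⟨h, fun i hi => X_lt_one β i hi⟩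
    · refine Or.inr (Or.inr (fun i hi => ⟨?_, X_lt_one β i hi⟩))
      exact lt_of_le_of_ne (X_nonneg β i) (Ne.symm (h i hi))
  have hkey := key β hβ1 (puCoeff β) (fun i => (betaT β)^[i] 1) (by simp)
    (fun i => puCoeff_rec β i) (fun i => X_nonneg β i) (fun i => X_le_one β i)
    γ (fun k => lt_trans one_pos (hγ1 k)) hγlim hside'
  have hco : ∀ i, ∀ᶠ k in atTop, puCoeff (γ k) i = puCoeff β i := by
    intro i
    cases i with
    | zero => filter_upwards with k; rfl
    | succ j =>
      filter_upwards [(hkey (j + 1)).2.2 j rfl] with k hk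
      rw [puCoeff_succ]; exact hk
  have := tuo_of_coeffs (fun k i => puCoeff (γ k) i) (puCoeff β)
    (fun k i => puCoeff_abs_le (γ k) (lt_trans one_pos (hγ1 k)) (hγ2 k) i)
    (fun i => puCoeff_abs_le β (lt_trans one_pos hβ1) hβ2 i) hco K hK hKc
  exact this

/-! ### the left limit at a simple Parry number -/

noncomputable def leftCoeff (β : ℝ) (N : ℕ) : ℕ → ℤ := fun i =>
  if i % N = 0 then (if i = 0 then -1 else 0) else puCoeff β (i % N)

lemma tuo_to_left (β : ℝ) (hβ1 : 1 < β) (hβ2 : β < 2)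
    (N : ℕ) (hN2 : 2 ≤ N) (hN0 : (betaT β)^[N] 1 = 0)
    (hmin : ∀ m : ℕ, 1 ≤ m → m < N → (betaT β)^[m] 1 ≠ 0)
    (γ : ℕ → ℝ) (hγ1 : ∀ k, 1 < γ k) (hγb : ∀ k, γ k < β)
    (hγlim : Tendsto γ atTop (nhds β))
    (K : Set ℂ) (hK : K ⊆ {z : ℂ | ‖z‖ < 1}) (hKc : IsCompact K) :
    TendstoUniformlyOn (fun k z => parryUpper (γ k) z)
      (fun z => parryUpper β z / (1 - z ^ N)) atTop K := by
  have hNpos : 0 < N := by omega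
  set c : ℕ → ℤ := leftCoeff β N with hc
  set y : ℕ → ℝ := fun i => (betaT β)^[i % N] 1 with hy
  -- positivity of the periodic orbit
  have hXpos : ∀ r, r < N → 0 < (betaT β)^[r] 1 := by
    intro r hr
    rcases Nat.eq_zero_or_pos r with rfl | hr1
    · norm_num
    · exact lt_of_le_of_ne (X_nonneg β r) (Ne.symm (hmin r hr1 hr))
  -- the N-th digit is 1
  have hXN1 : β * (betaT β)^[N - 1] 1 = (puCoeff β N : ℝ) := by
    have := puCoeff_rec β (N - 1)
    rw [show N - 1 + 1 = N by omega] at this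
    rw [this, hN0, add_zero]
  have htN : puCoeff β N = 1 := by
    have h1 : 0 < β * (betaT β)^[N - 1] 1 := by
      have := hXpos (N - 1) (by omega)
      positivity
    have h2 : β * (betaT β)^[N - 1] 1 < 2 := by
      have := X_le_one β (N - 1)
      have := X_nonneg β (N - 1)
      nlinarith
    rw [hXN1] at h1 h2
    have h1' : (0:ℤ) < puCoeff β N := by exact_mod_cast h1
    have h2' : puCoeff β N < 2 := by exact_mod_cast h2
    omega
  -- orbit vanishes from N on, so coefficients vanish beyond N
  have hXzero : ∀ m, (betaT β)^[N + m] 1 = 0 := by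
    intro m
    induction m with
    | zero => simpa using hN0
    | succ m ih =>
      rw [show N + (m + 1) = (N + m) + 1 by omega, Function.iterate_succ_apply', ih]
      simp [betaT]
  have hczero : ∀ i, N < i → puCoeff β i = 0 := by
    intro i hi
    obtain ⟨j, rfl⟩ : ∃ j, i = j + 1 := ⟨i - 1, by omega⟩
    rw [puCoeff_succ]
    have : (betaT β)^[j] 1 = 0 := by
      have := hXzero (j - N)
      rwa [show N + (j - N) = j by omega] at this
    rw [this, mul_zero, Int.floor_zero]
  -- recurrence for (c, y)
  have hy0 : y 0 = 1 := by simp [hy]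
  have hrec : ∀ i, β * y i = (c (i + 1) : ℝ) + y (i + 1) := by
    intro i
    set r := i % N with hrdef
    have hrN : r < N := Nat.mod_lt i hNpos
    have hmod : (i + 1) % N = (r + 1) % N := by
      conv_lhs => rw [Nat.add_mod, hrdef.symm]
      congr 1
      rw [Nat.mod_eq_of_lt (show 1 < N by omega)]
    rcases lt_or_eq_of_le (Nat.succ_le_of_lt hrN) with hlt | heq
    · -- r + 1 < N
      have h1 : (i + 1) % N = r + 1 := by rw [hmod, Nat.mod_eq_of_lt hlt]
      have h2 : c (i + 1) = puCoeff β (r + 1) := by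
        simp only [hc, leftCoeff, h1]
        rw [if_neg (by omega)]
      have h3 : y (i + 1) = (betaT β)^[r + 1] 1 := by simp only [hy, h1]
      rw [h2, h3]
      exact puCoeff_rec β r
    · -- r + 1 = N
      have hrN' : r + 1 = N := heq
      have h1 : (i + 1) % N = 0 := by rw [hmod, hrN', Nat.mod_self]
      have h2 : c (i + 1) = 0 := by
        show leftCoeff β N (i + 1) = 0
        unfold leftCoeff
        rw [if_pos h1, if_neg (by omega)]
      have h3 : y (i + 1) = 1 := by simp only [hy, h1]; norm_num
      have h4 : y i = (betaT β)^[N - 1] 1 := by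
        simp only [hy, ← hrdef]
        congr 1
        omega
      rw [h2, h3, h4, hXN1, htN]
      norm_num
  have hyge : ∀ i, 0 ≤ y i := fun i => X_nonneg β _
  have hyle : ∀ i, y i ≤ 1 := fun i => X_le_one β _
  have hypos : ∀ i, 1 ≤ i → 0 < y i := fun i _ => hXpos (i % N) (Nat.mod_lt i hNpos)
  have hkey := key β hβ1 c y hy0 hrec hyge hyle γ
    (fun k => lt_trans one_pos (hγ1 k)) hγlim
    (Or.inr (Or.inl ⟨hγb, hypos⟩))
  -- coefficient bound for c
  have hcb : ∀ i, |c i| ≤ 1 := by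
    intro i
    simp only [hc, leftCoeff]
    split
    · split <;> norm_num
    · exact puCoeff_abs_le β (lt_trans one_pos hβ1) hβ2 _
  -- eventual coefficientwise equality
  have hco : ∀ i, ∀ᶠ k in atTop, puCoeff (γ k) i = c i := by
    intro i
    cases i with
    | zero =>
      filter_upwards with k
      simp [hc, leftCoeff, puCoeff]
    | succ j =>
      filter_upwards [(hkey (j + 1)).2.2 j rfl] with k hk
      rw [puCoeff_succ]; exact hk
  have htuo := tuo_of_coeffs (fun k i => puCoeff (γ k) i) c
    (fun k i => puCoeff_abs_le (γ k) (lt_trans one_pos (hγ1 k))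
      (lt_trans (hγb k) hβ2) i) hcb hco K hK hKc
  refine htuo.congr_right ?_
  -- the series identity on K
  intro z hzK
  have hz : ‖z‖ < 1 := hK hzK
  have hcb' : ∀ i, |((c i : ℝ))| ≤ 1 := by
    intro i; rw [← Int.cast_abs]; exact_mod_cast hcb i
  have hpb' : ∀ i, |((puCoeff β i : ℝ))| ≤ 1 := by
    intro i; rw [← Int.cast_abs]
    exact_mod_cast puCoeff_abs_le β (lt_trans one_pos hβ1) hβ2 i
  have hSb : Summable (fun i => (c i : ℂ) * z ^ i) := summable_aux c 1 hcb' z hz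
  set S : ℂ := ∑' i, (c i : ℂ) * z ^ i with hS
  -- periodicity of c
  have hper : ∀ i, 1 ≤ i → c (i + N) = c i := by
    intro i hi
    simp only [hc, leftCoeff, Nat.add_mod_right]
    split
    · rw [if_neg (by omega), if_neg (by omega)]
    · rfl
  have hcN : c N = 0 := by
    show leftCoeff β N N = 0
    unfold leftCoeff
    rw [if_pos (Nat.mod_self N), if_neg (by omega)]
  have hc0 : c 0 = -1 := by simp [hc, leftCoeff]
  -- S = (∑ i < N, c i z^i) + (S + 1) * z^N
  have hU : Summable (fun i => (c (i + N) : ℂ) * z ^ i) :=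
    summable_aux (fun i => c (i + N)) 1 (fun i => hcb' _) z hz
  have hshift : ∑' i, (c (i + N) : ℂ) * z ^ i = S + 1 := by
    rw [Summable.tsum_eq_zero_add hU]
    have h0 : (c (0 + N) : ℂ) * z ^ 0 = 0 := by
      rw [Nat.zero_add, hcN]; norm_num
    rw [h0, zero_add]
    have he : ∀ i : ℕ, (c (i + 1 + N) : ℂ) * z ^ (i + 1) = (c (i + 1) : ℂ) * z ^ (i + 1) := by
      intro i; rw [hper (i + 1) (by omega)]
    rw [tsum_congr he]
    rw [hS, Summable.tsum_eq_zero_add hSb, hc0]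
    push_cast
    ring
  have hmain : S = (∑ i ∈ Finset.range N, (c i : ℂ) * z ^ i) + (S + 1) * z ^ N := by
    conv_lhs => rw [hS, ← Summable.sum_add_tsum_nat_add N hSb]
    congr 1
    have he : ∀ i : ℕ, (c (i + N) : ℂ) * z ^ (i + N) = ((c (i + N) : ℂ) * z ^ i) * z ^ N := by
      intro i; rw [pow_add]; ring
    rw [tsum_congr he, tsum_mul_right, hshift]
  -- parryUpper β z is a polynomial
  have hP : parryUpper β z = (∑ i ∈ Finset.range N, (puCoeff β i : ℂ) * z ^ i) + z ^ N := by
    rw [parryUpper, tsum_eq_sum (s := Finset.range (N + 1)) ?_]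
    · rw [Finset.sum_range_succ, htN]
      norm_num
    · intro i hi
      rw [hczero i (by simpa using hi)]
      norm_num
  have hsum_eq : (∑ i ∈ Finset.range N, (c i : ℂ) * z ^ i)
      = ∑ i ∈ Finset.range N, (puCoeff β i : ℂ) * z ^ i := by
    refine Finset.sum_congr rfl (fun i hi => ?_)
    rcases Nat.eq_zero_or_pos i with rfl | hipos
    · rw [hc0]; rfl
    · have : i % N = i := Nat.mod_eq_of_lt (Finset.mem_range.mp hi)
      simp only [hc, leftCoeff, this]
      rw [if_neg (by omega)]
  -- 1 - z^N ≠ 0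
  have hzN : ‖z ^ N‖ < 1 := by
    rw [norm_pow]
    exact pow_lt_one₀ (norm_nonneg z) hz (by omega)
  have hne1 : (1 : ℂ) - z ^ N ≠ 0 := by
    intro h
    have : z ^ N = 1 := by linear_combination -h
    rw [this] at hzN
    simp at hzN
  rw [eq_div_iff hne1]
  rw [hP, ← hsum_eq]
  linear_combination hmain
/-! ### the main theorem -/

/-- let `β ∈ (1, (1+√5)/2)`.
(i) If `β` is not a simple Parry number, then for every sequence
`γ_k ∈ (1, (1+√5)/2)` with `γ_k → β`, the functions `f_{γ_k}` converge to `f_β`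
uniformly on every compact subset of the open unit disk.
(ii) If `β` is a simple Parry number and `N` is the smallest positive integer with
`T_β^N(1) = 0`, then `f_γ → f_β` uniformly on compacts of `|z| < 1` as `γ → β⁺`,
while `f_γ(z) → f_β(z)/(1 − z^N)` uniformly on compacts of `|z| < 1` as `γ → β⁻`. -/
theorem parry_upper_right_left_continuity
    (β : ℝ) (hβ1 : 1 < β) (hβ2 : β < (1 + Real.sqrt 5) / 2) :
    ((¬ ∃ N : ℕ, 1 ≤ N ∧ (betaT β)^[N] 1 = 0) →
      ∀ γ : ℕ → ℝ, (∀ k, 1 < γ k ∧ γ k < (1 + Real.sqrt 5) / 2) →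
        Filter.Tendsto γ Filter.atTop (nhds β) →
        ∀ K : Set ℂ, K ⊆ {z : ℂ | ‖z‖ < 1} → IsCompact K →
          TendstoUniformlyOn (fun k z => parryUpper (γ k) z) (parryUpper β)
            Filter.atTop K) ∧
    (∀ N : ℕ, 1 ≤ N → (betaT β)^[N] 1 = 0 →
      (∀ m : ℕ, 1 ≤ m → m < N → (betaT β)^[m] 1 ≠ 0) →
      ((∀ γ : ℕ → ℝ, (∀ k, β < γ k ∧ γ k < (1 + Real.sqrt 5) / 2) →
        Filter.Tendsto γ Filter.atTop (nhds β) →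
        ∀ K : Set ℂ, K ⊆ {z : ℂ | ‖z‖ < 1} → IsCompact K →
          TendstoUniformlyOn (fun k z => parryUpper (γ k) z) (parryUpper β)
            Filter.atTop K) ∧
       (∀ γ : ℕ → ℝ, (∀ k, 1 < γ k ∧ γ k < β) →
        Filter.Tendsto γ Filter.atTop (nhds β) →
        ∀ K : Set ℂ, K ⊆ {z : ℂ | ‖z‖ < 1} → IsCompact K →
          TendstoUniformlyOn (fun k z => parryUpper (γ k) z)
            (fun z => parryUpper β z / (1 - z ^ N)) Filter.atTop K))) := by
  have hφ2 : (1 + Real.sqrt 5) / 2 < 2 := by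
    nlinarith [Real.sq_sqrt (show (0:ℝ) ≤ 5 by norm_num), Real.sqrt_nonneg 5]
  have hβ2' : β < 2 := lt_trans hβ2 hφ2
  constructor
  · intro hns γ hγ hγlim K hK hKc
    refine tuo_to_self β hβ1 hβ2' γ (fun k => (hγ k).1)
      (fun k => lt_trans (hγ k).2 hφ2) hγlim (Or.inr ?_) K hK hKc
    intro i hi h0
    exact hns ⟨i, hi, h0⟩
  · intro N hN1 hN0 hmin
    have hN2 : 2 ≤ N := by
      by_contra h
      have hN1' : N = 1 := by omega
      rw [hN1'] at hN0
      have h1 : Int.fract β = 0 := by simpa [betaT] using hN0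
      have hfl : ⌊β⌋ = 1 := by
        rw [Int.floor_eq_iff]
        constructor
        · exact_mod_cast hβ1.le
        · push_cast; linarith
      have : Int.fract β = β - 1 := by
        rw [Int.fract, hfl]; norm_num
      rw [this] at h1
      linarith
    constructor
    · intro γ hγ hγlim K hK hKc
      exact tuo_to_self β hβ1 hβ2' γ (fun k => lt_trans hβ1 (hγ k).1)
        (fun k => lt_trans (hγ k).2 hφ2) hγlim (Or.inl (fun k => (hγ k).1.le)) K hK hKc
    · intro γ hγ hγlim K hK hKc
      exact tuo_to_left β hβ1 hβ2' N hN2 hN0 hmin γ (fun k => (hγ k).1)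
        (fun k => (hγ k).2) hγlim K hK hKc
end

section
/- Let β with 1 < β < (1+√5)/2 be a reciprocal algebraic integer with monic minimal polynomial P_β (which, being reciprocal, has constant coefficient 1), and let n = dyg(β). Then there exists a formal power series U(X) = −1 + Σ_{j≥1} b_j X^j with all coefficients b_j ∈ ℤ such that P_β(X) = U(X)·f_β(X) in ℤ[[X]], and the radius of convergence of U(z) is at least θ_{n−1}; in particular U defines a holomorphic function on the open disk |z| < θ_{n−1}. -/
lemma mpf_iter_mem (β : ℝ) (i : ℕ) : 0 ≤ (betaT β)^[i] 1 ∧ (betaT β)^[i] 1 ≤ 1 := by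
  induction i with
  | zero => simp
  | succ i ih =>
    rw [Function.iterate_succ_apply']
    exact ⟨Int.fract_nonneg _, (Int.fract_lt_one _).le⟩

lemma mpf_digit_mem {β : ℝ} (hβ1 : 1 < β) (hβ2 : β < 2) (i : ℕ) :
    0 ≤ puCoeff β (i + 1) ∧ puCoeff β (i + 1) ≤ 1 := by
  obtain ⟨h0, h1⟩ := mpf_iter_mem β i
  constructor
  · exact Int.floor_nonneg.mpr (by nlinarith)
  · have : ⌊β * (betaT β)^[i] 1⌋ < 2 := Int.floor_lt.mpr (by push_cast; nlinarith)
    show ⌊β * (betaT β)^[i] 1⌋ ≤ 1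
    omega

/-- chain lemma: after a digit 1 at position i+1, the orbit stays small. -/
lemma mpf_chain {β : ℝ} (hβ1 : 1 < β) {n : ℕ}
    (hkey : ∀ m ≤ n - 2, β ^ m * (β - 1) < 1)
    {i : ℕ} (h1 : puCoeff β (i + 1) = 1) :
    ∀ j, j ≤ n - 2 → (betaT β)^[i + 1 + j] 1 ≤ β ^ j * (β - 1) := by
  intro j
  induction j with
  | zero =>
    intro _
    have hfl : ⌊β * (betaT β)^[i] 1⌋ = 1 := h1
    have h1' := (mpf_iter_mem β i).2
    rw [show i + 1 + 0 = i + 1 by omega, Function.iterate_succ_apply']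
    show Int.fract (β * (betaT β)^[i] 1) ≤ β ^ 0 * (β - 1)
    rw [Int.fract, hfl]
    push_cast
    nlinarith
  | succ j ih =>
    intro hj
    have hj' : j ≤ n - 2 := by omega
    have hx := ih hj'
    have hx0 := (mpf_iter_mem β (i + 1 + j)).1
    have hlt : β * (betaT β)^[i + 1 + j] 1 < 1 := by
      have := hkey (j + 1) hj
      calc β * (betaT β)^[i + 1 + j] 1 ≤ β * (β ^ j * (β - 1)) := by nlinarith
        _ = β ^ (j + 1) * (β - 1) := by ring
        _ < 1 := this
    have hge : 0 ≤ β * (betaT β)^[i + 1 + j] 1 := by nlinarith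
    rw [show i + 1 + (j + 1) = (i + 1 + j) + 1 by omega, Function.iterate_succ_apply']
    show Int.fract (β * (betaT β)^[i + 1 + j] 1) ≤ _
    rw [Int.fract_eq_self.mpr ⟨hge, hlt⟩]
    calc β * (betaT β)^[i + 1 + j] 1 ≤ β * (β ^ j * (β - 1)) := by nlinarith
      _ = β ^ (j + 1) * (β - 1) := by ring

/-- gap lemma: a digit 1 is followed by at least n-2 zeros. -/
lemma mpf_gap {β : ℝ} (hβ1 : 1 < β) {n : ℕ}
    (hkey : ∀ m ≤ n - 2, β ^ m * (β - 1) < 1)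
    {i : ℕ} (h1 : puCoeff β (i + 1) = 1) :
    ∀ j, 1 ≤ j → j ≤ n - 2 → puCoeff β (i + 1 + j) = 0 := by
  intro j hj1 hj2
  obtain ⟨j', rfl⟩ : ∃ j', j = j' + 1 := ⟨j - 1, by omega⟩
  have hx := mpf_chain hβ1 hkey h1 j' (by omega)
  have hx0 := (mpf_iter_mem β (i + 1 + j')).1
  have hlt : β * (betaT β)^[i + 1 + j'] 1 < 1 := by
    have := hkey (j' + 1) hj2
    calc β * (betaT β)^[i + 1 + j'] 1 ≤ β * (β ^ j' * (β - 1)) := by nlinarith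
      _ = β ^ (j' + 1) * (β - 1) := by ring
      _ < 1 := this
  have hge : 0 ≤ β * (betaT β)^[i + 1 + j'] 1 := by nlinarith
  rw [show i + 1 + (j' + 1) = (i + 1 + j') + 1 by omega]
  show ⌊β * (betaT β)^[i + 1 + j'] 1⌋ = 0
  exact Int.floor_eq_zero_iff.mpr ⟨hge, hlt⟩

lemma mpf_key {β x : ℝ} {n : ℕ} (hn : 3 ≤ n) (hβ1 : 1 < β)
    (hx0 : 0 < x) (hx1 : x < 1) (hxeq : -1 + x + x ^ (n - 1) = 0)
    (hd2 : β < x⁻¹) : ∀ m ≤ n - 2, β ^ m * (β - 1) < 1 := by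
  have hsub : x ^ (n - 1) = x ^ (n - 2) * x := by
    rw [← pow_succ]; congr 1; omega
  -- x⁻¹ - 1 = x^(n-2)
  have hinv : x⁻¹ - 1 = x ^ (n - 2) := by
    have h1 : x * (x⁻¹ - 1) = 1 - x := by field_simp
    have h2 : x * (x ^ (n - 2)) = 1 - x := by
      rw [mul_comm, ← hsub]; linarith
    have := h1.trans h2.symm
    exact mul_left_cancel₀ (ne_of_gt hx0) this
  have hb1 : β - 1 < x ^ (n - 2) := by rw [← hinv]; linarith
  have hb2 : β ^ (n - 2) < (x ^ (n - 2))⁻¹ := by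
    rw [← inv_pow]
    exact pow_lt_pow_left₀ hd2 (by linarith) (by omega)
  intro m hm
  have hmono : β ^ m ≤ β ^ (n - 2) := pow_le_pow_right₀ (by linarith) hm
  have hxp : (0:ℝ) < x ^ (n - 2) := pow_pos hx0 _
  calc β ^ m * (β - 1) ≤ β ^ (n - 2) * (β - 1) := by nlinarith [pow_pos (show (0:ℝ) < β by linarith) m]
    _ < (x ^ (n - 2))⁻¹ * x ^ (n - 2) := by
        apply mul_lt_mul'' hb2 hb1 (le_of_lt (pow_pos (by linarith) _)) (by linarith)
    _ = 1 := inv_mul_cancel₀ (ne_of_gt hxp)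

lemma mpf_coeff_zero {β : ℝ} (hint : IsIntegral ℤ β)
    (hrec : (minpoly ℚ β).reverse = minpoly ℚ β) : (minpoly ℤ β).coeff 0 = 1 := by
  have hQ : IsIntegral ℚ β := hint.tower_top
  have hmap : minpoly ℚ β = (minpoly ℤ β).map (algebraMap ℤ ℚ) :=
    minpoly.isIntegrallyClosed_eq_field_fractions ℚ ℝ hint
  have h0 : (minpoly ℚ β).coeff 0 = 1 := by
    rw [← hrec, Polynomial.coeff_zero_reverse, (minpoly.monic hQ).leadingCoeff]
  rw [hmap, Polynomial.coeff_map] at h0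
  have : ((minpoly ℤ β).coeff 0 : ℚ) = 1 := h0
  exact_mod_cast this

lemma mpf_gapsum (t : ℕ → ℤ) (r Q : ℝ) (n : ℕ) (hn : 3 ≤ n)
    (hr0 : 0 < r) (hr1 : r < 1)
    (ht01 : ∀ k, 1 ≤ k → 0 ≤ t k ∧ t k ≤ 1)
    (hgap : ∀ i, t (i + 1) = 1 → ∀ j, 1 ≤ j → j ≤ n - 2 → t (i + 1 + j) = 0)
    (hQ0 : 0 ≤ Q) (hQrec : r + r ^ (n - 1) * Q = Q) :
    ∀ N a m, (∀ j, 1 ≤ j → j ≤ m → t (a + j) = 0) →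
      ∑ k ∈ Finset.range N, (t (a + 1 + k) : ℝ) * r ^ (k + 1) ≤ r ^ m * Q := by
  have Speel : ∀ a N, ∑ k ∈ Finset.range (N + 1), (t (a + 1 + k) : ℝ) * r ^ (k + 1)
      = (t (a + 1) : ℝ) * r + r * ∑ k ∈ Finset.range N, (t (a + 1 + 1 + k) : ℝ) * r ^ (k + 1) := by
    intro a N
    rw [Finset.sum_range_succ' (fun k => (t (a + 1 + k) : ℝ) * r ^ (k + 1)) N]
    have h : ∑ k ∈ Finset.range N, (t (a + 1 + (k + 1)) : ℝ) * r ^ (k + 1 + 1)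
        = r * ∑ k ∈ Finset.range N, (t (a + 1 + 1 + k) : ℝ) * r ^ (k + 1) := by
      rw [Finset.mul_sum]
      apply Finset.sum_congr rfl
      intro k _
      rw [show a + 1 + (k + 1) = a + 1 + 1 + k by omega]
      ring
    rw [h]
    ring
  intro N
  induction N using Nat.strong_induction_on with
  | _ N ih =>
    intro a m hzero
    match N with
    | 0 =>
      simp only [Finset.range_zero, Finset.sum_empty]
      positivity
    | Nat.succ N' =>
      rw [Speel a N']
      match m with
      | 0 =>
        by_cases h1 : t (a + 1) = 1
        · have hS := ih N' (Nat.lt_succ_self _) (a + 1) (n - 2)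
            (fun j hj1 hj2 => hgap a h1 j hj1 hj2)
          have hrn : r * r ^ (n - 2) = r ^ (n - 1) := by
            rw [show n - 1 = (n - 2) + 1 by omega, pow_succ]; ring
          calc (t (a + 1) : ℝ) * r + r * ∑ k ∈ Finset.range N', (t (a + 1 + 1 + k) : ℝ) * r ^ (k + 1)
              ≤ 1 * r + r * (r ^ (n - 2) * Q) := by
                have := hS
                rw [h1]
                push_cast
                nlinarith
            _ = r + r ^ (n - 1) * Q := by rw [← hrn]; ring
            _ = Q := hQrec
            _ = r ^ 0 * Q := by ring
        · have h0 : t (a + 1) = 0 := by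
            have := ht01 (a + 1) (by omega); omega
          have hS := ih N' (Nat.lt_succ_self _) (a + 1) 0 (fun j hj1 hj2 => by omega)
          rw [h0]
          push_cast
          simp only [pow_zero, one_mul] at hS ⊢
          nlinarith
      | Nat.succ m' =>
        have h0 : t (a + 1) = 0 := hzero 1 (by omega) (by omega)
        have hS := ih N' (Nat.lt_succ_self _) (a + 1) m'
          (fun j hj1 hj2 => by
            have := hzero (j + 1) (by omega) (by omega)
            rwa [show a + (j + 1) = a + 1 + j by omega] at this)
        rw [h0]
        push_cast
        have : r ^ (m' + 1) * Q = r * (r ^ m' * Q) := by ring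
        rw [this]
        nlinarith

lemma mpf_bound (b t p : ℕ → ℤ) (r Q C : ℝ)
    (hr0 : 0 < r) (hr1 : r < 1) (hQ0 : 0 ≤ Q) (hQ1 : Q < 1) (hC0 : 0 ≤ C)
    (hrec : ∀ i, (b i : ℝ) = ∑ j ∈ Finset.range i, (b j : ℝ) * (t (i - j) : ℝ) - (p i : ℝ))
    (ht01 : ∀ k, 1 ≤ k → 0 ≤ t k ∧ t k ≤ 1)
    (hgs : ∀ i, ∑ k ∈ Finset.range i, (t (k + 1) : ℝ) * r ^ (k + 1) ≤ Q)
    (hC : ∀ i, |(p i : ℝ)| ≤ C * (1 - Q)) :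
    ∀ i, |(b i : ℝ)| * r ^ i ≤ C := by
  intro i
  induction i using Nat.strong_induction_on with
  | _ i ih =>
    have h1 : |(b i : ℝ)| ≤ ∑ j ∈ Finset.range i, |(b j : ℝ)| * (t (i - j) : ℝ) + |(p i : ℝ)| := by
      rw [hrec i, sub_eq_add_neg]
      refine (abs_add_le _ _).trans ?_
      rw [abs_neg]
      gcongr
      refine (Finset.abs_sum_le_sum_abs _ _).trans ?_
      apply Finset.sum_le_sum
      intro j hj
      rw [abs_mul]
      have hij : 1 ≤ i - j := by have := Finset.mem_range.mp hj; omega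
      have := (ht01 (i - j) hij).1
      gcongr
      rw [abs_of_nonneg (by exact_mod_cast this)]
    have hri : (0:ℝ) ≤ r ^ i := by positivity
    have h2 : |(b i : ℝ)| * r ^ i
        ≤ ∑ j ∈ Finset.range i, |(b j : ℝ)| * (t (i - j) : ℝ) * r ^ i + |(p i : ℝ)| * r ^ i := by
      calc |(b i : ℝ)| * r ^ i ≤ (∑ j ∈ Finset.range i, |(b j : ℝ)| * (t (i - j) : ℝ) + |(p i : ℝ)|) * r ^ i := by
            gcongr
        _ = _ := by rw [add_mul, Finset.sum_mul]
    have h3 : ∑ j ∈ Finset.range i, |(b j : ℝ)| * (t (i - j) : ℝ) * r ^ i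
        ≤ C * ∑ j ∈ Finset.range i, (t (i - j) : ℝ) * r ^ (i - j) := by
      rw [Finset.mul_sum]
      apply Finset.sum_le_sum
      intro j hj
      have hj' := Finset.mem_range.mp hj
      have hsplit : r ^ i = r ^ j * r ^ (i - j) := by
        rw [← pow_add]; congr 1; omega
      have ht := (ht01 (i - j) (by omega)).1
      have ht' : (0:ℝ) ≤ (t (i - j) : ℝ) := by exact_mod_cast ht
      calc |(b j : ℝ)| * (t (i - j) : ℝ) * r ^ i
          = (|(b j : ℝ)| * r ^ j) * ((t (i - j) : ℝ) * r ^ (i - j)) := by rw [hsplit]; ring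
        _ ≤ C * ((t (i - j) : ℝ) * r ^ (i - j)) := by
            have := ih j hj'
            have : (0:ℝ) ≤ (t (i - j) : ℝ) * r ^ (i - j) := by positivity
            nlinarith [ih j hj']
        _ = C * ((t (i - j) : ℝ) * r ^ (i - j)) := rfl
    have hreflect : ∑ j ∈ Finset.range i, (t (i - j) : ℝ) * r ^ (i - j)
        = ∑ k ∈ Finset.range i, (t (k + 1) : ℝ) * r ^ (k + 1) := by
      rw [← Finset.sum_range_reflect (fun k => (t (k + 1) : ℝ) * r ^ (k + 1)) i]
      apply Finset.sum_congr rfl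
      intro j hj
      have hj' := Finset.mem_range.mp hj
      have : i - 1 - j + 1 = i - j := by omega
      simp only [this]
    have h4 : ∑ j ∈ Finset.range i, |(b j : ℝ)| * (t (i - j) : ℝ) * r ^ i ≤ C * Q := by
      refine h3.trans ?_
      rw [hreflect]
      exact mul_le_mul_of_nonneg_left (hgs i) hC0
    have h5 : |(p i : ℝ)| * r ^ i ≤ C * (1 - Q) := by
      have hle1 : r ^ i ≤ 1 := pow_le_one₀ hr0.le hr1.le
      calc |(p i : ℝ)| * r ^ i ≤ |(p i : ℝ)| * 1 := by gcongr <;> exact abs_nonneg _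
        _ = |(p i : ℝ)| := mul_one _
        _ ≤ C * (1 - Q) := hC i
    calc |(b i : ℝ)| * r ^ i ≤ C * Q + C * (1 - Q) := by linarith
      _ = C := by ring

/-- let `β ∈ (1, (1+√5)/2)` be a reciprocal algebraic integer with monic
minimal polynomial `P_β` and `n = dyg β` (i.e. `θ_n⁻¹ ≤ β < θ_{n−1}⁻¹`). Then there is
a formal power series `U(X) = −1 + Σ_{j≥1} b_j X^j` with integer coefficients such that
`P_β(X) = U(X)·f_β(X)` in `ℤ[[X]]`, and the radius of convergence of `U` is at least
`θ_{n−1}`: `U` defines a holomorphic function on the open disk `|z| < θ_{n−1}`. -/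
theorem minimal_polynomial_fracturability
    (θ : ℕ → ℝ)
    (hθ : ∀ n : ℕ, 2 ≤ n → θ n ∈ Set.Ioo (0 : ℝ) 1 ∧ -1 + θ n + θ n ^ n = 0)
    (β : ℝ) (hβ1 : 1 < β) (hβ2 : β < (1 + Real.sqrt 5) / 2)
    (hint : IsIntegral ℤ β)
    (hrec : (minpoly ℚ β).reverse = minpoly ℚ β)
    (n : ℕ) (hn : 3 ≤ n)
    (hd1 : (θ n)⁻¹ ≤ β) (hd2 : β < (θ (n - 1))⁻¹) :
    ∃ b : ℕ → ℤ, b 0 = -1 ∧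
      PowerSeries.mk (fun i => (minpoly ℤ β).coeff i)
        = PowerSeries.mk b * PowerSeries.mk (fun i => puCoeff β i) ∧
      ∀ z : ℂ, ‖z‖ < θ (n - 1) →
        Summable (fun j : ℕ => ‖(b j : ℂ) * z ^ j‖) := by
  -- basic facts about β
  have hsqrt5 : Real.sqrt 5 < 3 := by
    nlinarith [Real.sq_sqrt (by norm_num : (0:ℝ) ≤ 5), Real.sqrt_nonneg 5]
  have hβ2' : β < 2 := by linarith
  -- facts about θ (n-1)
  obtain ⟨⟨hθ0, hθ1⟩, hθeq⟩ := hθ (n - 1) (by omega)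
  set θ1 := θ (n - 1) with hθ1def
  have hkey : ∀ m ≤ n - 2, β ^ m * (β - 1) < 1 := mpf_key hn hβ1 hθ0 hθ1 hθeq hd2
  have ht01 : ∀ k, 1 ≤ k → 0 ≤ puCoeff β k ∧ puCoeff β k ≤ 1 := by
    intro k hk
    obtain ⟨k', rfl⟩ : ∃ k', k = k' + 1 := ⟨k - 1, by omega⟩
    exact mpf_digit_mem hβ1 hβ2' k'
  have hgap : ∀ i, puCoeff β (i + 1) = 1 →
      ∀ j, 1 ≤ j → j ≤ n - 2 → puCoeff β (i + 1 + j) = 0 :=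
    fun i h1 j hj1 hj2 => mpf_gap hβ1 hkey h1 j hj1 hj2
  -- power series setup
  set P := minpoly ℤ β with hPdef
  have hP0 : P.coeff 0 = 1 := mpf_coeff_zero hint hrec
  set F : PowerSeries ℤ := PowerSeries.mk (fun i => puCoeff β i) with hFdef
  have hu : PowerSeries.constantCoeff F = ((-1 : ℤˣ) : ℤ) := by
    simp [hFdef, puCoeff]
  set V : PowerSeries ℤ := F.invOfUnit (-1) with hVdef
  have hFV : F * V = 1 := PowerSeries.mul_invOfUnit F (-1) hu
  have hVF : V * F = 1 := by rw [mul_comm]; exact hFV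
  set b : ℕ → ℤ := fun j => PowerSeries.coeff j (PowerSeries.mk (fun i => P.coeff i) * V)
    with hbdef
  have hmkb : PowerSeries.mk b = PowerSeries.mk (fun i => P.coeff i) * V := by
    ext j
    simp [hbdef, PowerSeries.coeff_mk]
  have hid : PowerSeries.mk (fun i => P.coeff i) = PowerSeries.mk b * F := by
    rw [hmkb, mul_assoc, hVF, mul_one]
  have hb0 : b 0 = -1 := by
    have : (PowerSeries.constantCoeff) (PowerSeries.mk (fun i => P.coeff i) * V) = -1 := by
      rw [map_mul]
      rw [hVdef, PowerSeries.constantCoeff_invOfUnit]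
      have h1 : (PowerSeries.constantCoeff) (PowerSeries.mk (fun i => P.coeff i)) = 1 := by
        simpa using hP0
      rw [h1]
      simp
    simpa [hbdef, ← PowerSeries.coeff_zero_eq_constantCoeff] using this
  -- the recurrence satisfied by b
  have hrecZ : ∀ i, b i = ∑ j ∈ Finset.range i, b j * puCoeff β (i - j) - P.coeff i := by
    intro i
    have h1 : P.coeff i = (PowerSeries.coeff i) (PowerSeries.mk b * F) := by
      rw [← hid, PowerSeries.coeff_mk]
    rw [PowerSeries.coeff_mul] at h1
    rw [Finset.Nat.sum_antidiagonal_eq_sum_range_succ_mk] at h1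
    rw [Finset.sum_range_succ] at h1
    simp only [hFdef, PowerSeries.coeff_mk, Nat.sub_self] at h1
    have hpu0 : puCoeff β 0 = -1 := rfl
    rw [hpu0] at h1
    linarith [h1]
  refine ⟨b, hb0, hid, ?_⟩
  -- summability
  intro z hz
  set az := ‖z‖ with hazdef
  have haz0 : 0 ≤ az := norm_nonneg _
  set r : ℝ := (az + θ1) / 2 with hrdef
  have hr0 : 0 < r := by rw [hrdef]; linarith
  have hazr : az < r := by rw [hrdef]; linarith
  have hrθ : r < θ1 := by rw [hrdef]; linarith
  have hr1 : r < 1 := by linarith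
  have hθpow : θ1 ^ (n - 1) = 1 - θ1 := by linarith [hθeq]
  have hpow : r ^ (n - 1) < θ1 ^ (n - 1) := pow_lt_pow_left₀ hrθ hr0.le (by omega)
  have h1r : 0 < 1 - r ^ (n - 1) := by rw [hθpow] at hpow; linarith
  set Q : ℝ := r / (1 - r ^ (n - 1)) with hQdef
  have hQ0 : 0 ≤ Q := div_nonneg hr0.le h1r.le
  have hQ1 : Q < 1 := by
    rw [hQdef, div_lt_one h1r]
    rw [hθpow] at hpow
    linarith
  have hQrec : r + r ^ (n - 1) * Q = Q := by
    rw [hQdef]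
    field_simp
    ring
  have hgs : ∀ i, ∑ k ∈ Finset.range i, (puCoeff β (k + 1) : ℝ) * r ^ (k + 1) ≤ Q := by
    intro i
    have := mpf_gapsum (puCoeff β) r Q n hn hr0 hr1 ht01 hgap hQ0 hQrec i 0 0
      (fun j hj1 hj2 => by omega)
    simp only [pow_zero, one_mul] at this
    refine le_trans (le_of_eq ?_) this
    apply Finset.sum_congr rfl
    intro k _
    rw [show 0 + 1 + k = k + 1 by omega]
  -- the constant C
  set D : ℝ := ∑ i ∈ Finset.range (P.natDegree + 1), |(P.coeff i : ℝ)| with hDdef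
  have hD0 : 0 ≤ D := Finset.sum_nonneg fun i _ => abs_nonneg _
  set C : ℝ := D / (1 - Q) with hCdef
  have h1Q : 0 < 1 - Q := by linarith
  have hC0 : 0 ≤ C := div_nonneg hD0 h1Q.le
  have hCmul : C * (1 - Q) = D := div_mul_cancel₀ D (ne_of_gt h1Q)
  have hC : ∀ i, |((P.coeff i : ℤ) : ℝ)| ≤ C * (1 - Q) := by
    intro i
    rw [hCmul]
    by_cases hi : i ≤ P.natDegree
    · exact Finset.single_le_sum (f := fun i => |(P.coeff i : ℝ)|)
        (fun j _ => abs_nonneg _) (Finset.mem_range.mpr (by omega))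
    · have : P.coeff i = 0 := P.coeff_eq_zero_of_natDegree_lt (by omega)
      rw [this]
      simpa using hD0
  clear_value az r Q D C
  have hrecR : ∀ i, ((b i : ℤ) : ℝ)
      = ∑ j ∈ Finset.range i, ((b j : ℤ) : ℝ) * ((puCoeff β (i - j) : ℤ) : ℝ)
        - ((P.coeff i : ℤ) : ℝ) := by
    intro i
    have := hrecZ i
    push_cast [this]
    rfl
  have hb : ∀ i, |((b i : ℤ) : ℝ)| * r ^ i ≤ C :=
    mpf_bound b (puCoeff β) (fun i => P.coeff i) r Q C hr0 hr1 hQ0 hQ1 hC0 hrecR ht01 hgs hC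
  -- conclude summability
  have hratio : az / r < 1 := (div_lt_one hr0).mpr hazr
  have hsum : Summable (fun j : ℕ => C * (az / r) ^ j) :=
    (summable_geometric_of_lt_one (by positivity) hratio).mul_left C
  apply Summable.of_nonneg_of_le (fun j => norm_nonneg _) _ hsum
  intro j
  have habs : ‖(b j : ℂ) * z ^ j‖ = |((b j : ℤ) : ℝ)| * az ^ j := by
    rw [norm_mul, norm_pow, Complex.norm_intCast, hazdef]
  rw [habs]
  have hbj : |((b j : ℤ) : ℝ)| ≤ C / r ^ j := (le_div_iff₀ (pow_pos hr0 j)).mpr (hb j)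
  calc |((b j : ℤ) : ℝ)| * az ^ j ≤ (C / r ^ j) * az ^ j :=
        mul_le_mul_of_nonneg_right hbj (pow_nonneg haz0 j)
    _ = C * (az / r) ^ j := by rw [div_pow]; ring
end
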